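/- arXiv:1506.02717 — 6 statements merged into one kernel-verified Lean document; each statement's English description precedes it below -/
import Mathlib

section
/- For all real x with |x| ≤ 0.23, we have ln(cos(2πx)) ≥ -4π²x². -/
open Complex Finset in
lemma my_sin_bound {x : ℝ} (hx : |x| ≤ 1) :
    |Real.sin x - (x - x ^ 3 / 6 + x ^ 5 / 120)| ≤ |x| ^ 6 * (7 / 4320) := by
  have hx1 : ‖x * I‖ ≤ 1 := by simpa using hx
  have hx2 : ‖-x * I‖ ≤ 1 := by simpa using hx
  have h1 := Complex.exp_bound hx1 (by norm_num : 0 < 6)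
  have h2 := Complex.exp_bound hx2 (by norm_num : 0 < 6)
  have hI6 : (I : ℂ) ^ 6 = -1 := by
    rw [show (6 : ℕ) = 2 * 3 from rfl, pow_mul, Complex.I_sq]; norm_num
  have hsin : ((Real.sin x : ℝ) : ℂ) - ((x : ℂ) - (x:ℂ) ^ 3 / 6 + (x:ℂ) ^ 5 / 120) =
      ((Complex.exp (-x * I) - ∑ m ∈ range 6, (-x * I) ^ m / m.factorial)
        - (Complex.exp (x * I) - ∑ m ∈ range 6, (x * I) ^ m / m.factorial)) * I / 2 := by
    rw [Complex.ofReal_sin, Complex.sin]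
    simp only [Finset.sum_range_succ, Finset.range_zero, Finset.sum_empty, Nat.factorial]
    push_cast
    ring_nf
    rw [hI6, Complex.I_sq, show (I : ℂ) ^ 4 = 1 from by
      rw [show (4 : ℕ) = 2 * 2 from rfl, pow_mul, Complex.I_sq]; norm_num]
    ring
  have key : |Real.sin x - (x - x ^ 3 / 6 + x ^ 5 / 120)|
      = ‖((Real.sin x : ℝ) : ℂ) - ((x : ℂ) - (x:ℂ) ^ 3 / 6 + (x:ℂ) ^ 5 / 120)‖ := by
    rw [← Real.norm_eq_abs, ← Complex.norm_real]
    push_cast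
    ring_nf
  have e1 : ‖Complex.exp (x * I) - ∑ m ∈ range 6, (x * I) ^ m / m.factorial‖
      ≤ |x| ^ 6 * (7 / 4320) := by
    refine h1.trans (le_of_eq ?_)
    simp [Nat.factorial, norm_mul, Complex.norm_I, Complex.norm_real]
    norm_num
  have e2 : ‖Complex.exp (-x * I) - ∑ m ∈ range 6, (-x * I) ^ m / m.factorial‖
      ≤ |x| ^ 6 * (7 / 4320) := by
    refine h2.trans (le_of_eq ?_)
    simp [Nat.factorial, norm_mul, Complex.norm_I, Complex.norm_real]
    norm_num
  rw [key, hsin]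
  calc ‖_‖
      ≤ (‖Complex.exp (-x * I) - ∑ m ∈ range 6, (-x * I) ^ m / m.factorial‖
        + ‖Complex.exp (x * I) - ∑ m ∈ range 6, (x * I) ^ m / m.factorial‖) / 2 := by
        rw [norm_div, norm_mul]
        simp only [Complex.norm_I, mul_one, Complex.norm_two]
        gcongr
        exact norm_sub_le _ _
    _ ≤ (|x| ^ 6 * (7 / 4320) + |x| ^ 6 * (7 / 4320)) / 2 := by gcongr
    _ = |x| ^ 6 * (7 / 4320) := by ring


noncomputable def Ppoly (s : ℝ) : ℝ := s - s ^ 3 / 6 + s ^ 5 / 120 + s ^ 6 * (7 / 4320)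

noncomputable def Epoly (u : ℝ) : ℝ :=
  1 + u + u ^ 2 / 2 + u ^ 3 / 6 + u ^ 4 / 24 + u ^ 5 / 120 + u ^ 6 / 720 + u ^ 7 / 5040

lemma Ppoly_nonneg {s : ℝ} (h0 : 0 ≤ s) (h1 : s ≤ 1) : 0 ≤ Ppoly s := by
  unfold Ppoly
  nlinarith [pow_le_one₀ h0 h1 (n := 2), pow_nonneg h0 3, pow_nonneg h0 5, pow_nonneg h0 6,
    mul_nonneg (pow_nonneg h0 2) h0]

lemma Ppoly_le_self {s : ℝ} (h0 : 0 ≤ s) (h1 : s ≤ 1) : Ppoly s ≤ s := by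
  unfold Ppoly
  nlinarith [pow_nonneg h0 3, pow_le_one₀ h0 h1 (n := 2), pow_nonneg h0 5, pow_nonneg h0 6,
    pow_le_pow_of_le_one h0 h1 (by norm_num : 3 ≤ 5), pow_le_pow_of_le_one h0 h1 (by norm_num : 3 ≤ 6)]

lemma Ppoly_mono {a b : ℝ} (h0 : 0 ≤ a) (hab : a ≤ b) (hb1 : b ≤ 1) : Ppoly a ≤ Ppoly b := by
  have hb0 : 0 ≤ b := h0.trans hab
  have ha1 : a ≤ 1 := hab.trans hb1
  have hQ : 0 ≤ 1 - (a ^ 2 + a * b + b ^ 2) / 6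
      + (a ^ 4 + a ^ 3 * b + a ^ 2 * b ^ 2 + a * b ^ 3 + b ^ 4) / 120
      + (a ^ 5 + a ^ 4 * b + a ^ 3 * b ^ 2 + a ^ 2 * b ^ 3 + a * b ^ 4 + b ^ 5) * (7 / 4320) := by
    nlinarith [pow_le_one₀ h0 ha1 (n := 2), pow_le_one₀ hb0 hb1 (n := 2),
      mul_le_one₀ ha1 hb0 hb1, pow_nonneg h0 4, pow_nonneg hb0 4, pow_nonneg h0 5,
      pow_nonneg hb0 5, mul_nonneg (pow_nonneg h0 3) hb0, mul_nonneg (pow_nonneg h0 2) (pow_nonneg hb0 2),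
      mul_nonneg h0 (pow_nonneg hb0 3), mul_nonneg (pow_nonneg h0 4) hb0,
      mul_nonneg (pow_nonneg h0 3) (pow_nonneg hb0 2), mul_nonneg (pow_nonneg h0 2) (pow_nonneg hb0 3),
      mul_nonneg h0 (pow_nonneg hb0 4)]
  have hkey : Ppoly b - Ppoly a = (b - a) * (1 - (a ^ 2 + a * b + b ^ 2) / 6
      + (a ^ 4 + a ^ 3 * b + a ^ 2 * b ^ 2 + a * b ^ 3 + b ^ 4) / 120
      + (a ^ 5 + a ^ 4 * b + a ^ 3 * b ^ 2 + a ^ 2 * b ^ 3 + a * b ^ 4 + b ^ 5) * (7 / 4320)) := by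
    unfold Ppoly; ring
  nlinarith [mul_nonneg (sub_nonneg.2 hab) hQ]

lemma Epoly_mono {a b : ℝ} (h0 : 0 ≤ a) (hab : a ≤ b) : Epoly a ≤ Epoly b := by
  unfold Epoly
  gcongr

lemma Epoly_pos {u : ℝ} (h0 : 0 ≤ u) : 0 < Epoly u := by
  unfold Epoly; positivity

lemma Epoly_le_exp {u : ℝ} (h0 : 0 ≤ u) : Epoly u ≤ Real.exp u := by
  have h := Real.sum_le_exp_of_nonneg h0 8
  refine le_trans (le_of_eq ?_) h
  rw [Finset.sum_range_succ, Finset.sum_range_succ, Finset.sum_range_succ, Finset.sum_range_succ,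
    Finset.sum_range_succ, Finset.sum_range_succ, Finset.sum_range_succ, Finset.sum_range_succ,
    Finset.sum_range_zero]
  unfold Epoly
  norm_num [Nat.factorial]







lemma step_lemma (a1 a2 : ℝ) (ha1 : 0 ≤ a1) (ha12 : a1 ≤ a2) (ha2 : a2 ≤ 1)
    (hnum : 1 ≤ (1 - 2 * Ppoly a2 ^ 2) * Epoly (4 * a1 ^ 2))
    {s : ℝ} (hs1 : a1 ≤ s) (hs2 : s ≤ a2) :
    1 ≤ (1 - 2 * Ppoly s ^ 2) * Epoly (4 * s ^ 2) := by
  have hs0 : 0 ≤ s := ha1.trans hs1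
  have hpm : Ppoly s ≤ Ppoly a2 := Ppoly_mono hs0 hs2 ha2
  have hp0 : 0 ≤ Ppoly s := Ppoly_nonneg hs0 (hs2.trans ha2)
  have hA : 1 - 2 * Ppoly a2 ^ 2 ≤ 1 - 2 * Ppoly s ^ 2 := by nlinarith
  have hE0 : 0 < Epoly (4 * a1 ^ 2) := Epoly_pos (by positivity)
  have hA0 : 0 ≤ 1 - 2 * Ppoly a2 ^ 2 := by nlinarith
  have hB : Epoly (4 * a1 ^ 2) ≤ Epoly (4 * s ^ 2) := by
    refine Epoly_mono (by positivity) ?_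
    nlinarith
  calc (1:ℝ) ≤ (1 - 2 * Ppoly a2 ^ 2) * Epoly (4 * a1 ^ 2) := hnum
    _ ≤ (1 - 2 * Ppoly s ^ 2) * Epoly (4 * s ^ 2) :=
        mul_le_mul hA hB hE0.le (hA0.trans hA)

lemma key_all {s : ℝ} (h0 : 0 ≤ s) (h1 : s ≤ 0.7226) :
    1 ≤ (1 - 2 * Ppoly s ^ 2) * Epoly (4 * s ^ 2) := by
  have hs1 : s ≤ 1 := by linarith
  rcases le_total s 0.5 with h | h
  · have hps : Ppoly s ≤ s := Ppoly_le_self h0 hs1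
    have hp0 : 0 ≤ Ppoly s := Ppoly_nonneg h0 hs1
    have hA : 1 - 2 * s ^ 2 ≤ 1 - 2 * Ppoly s ^ 2 := by nlinarith
    have h4s : (0:ℝ) ≤ 4 * s ^ 2 := by positivity
    have hB : 1 + 4 * s ^ 2 ≤ Epoly (4 * s ^ 2) := by
      unfold Epoly
      nlinarith [pow_nonneg h4s 2, pow_nonneg h4s 3, pow_nonneg h4s 4, pow_nonneg h4s 5,
        pow_nonneg h4s 6, pow_nonneg h4s 7]
    have hA0 : (0:ℝ) ≤ 1 - 2 * s ^ 2 := by nlinarith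
    calc (1:ℝ) ≤ (1 - 2 * s ^ 2) * (1 + 4 * s ^ 2) := by nlinarith [mul_nonneg (sq_nonneg s) (show (0:ℝ) ≤ 2 - 8 * s ^ 2 by nlinarith)]
      _ ≤ (1 - 2 * Ppoly s ^ 2) * Epoly (4 * s ^ 2) :=
          mul_le_mul hA hB (by positivity) (by nlinarith)
  · rcases le_total s 0.5648 with h2 | h2
    · exact step_lemma 0.5 0.5648 (by norm_num) (by norm_num) (by norm_num)
        (by norm_num [Ppoly, Epoly]) h h2
    rcases le_total s 0.6435 with h3 | h3
    · exact step_lemma 0.5648 0.6435 (by norm_num) (by norm_num) (by norm_num)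
        (by norm_num [Ppoly, Epoly]) h2 h3
    rcases le_total s 0.6889 with h4 | h4
    · exact step_lemma 0.6435 0.6889 (by norm_num) (by norm_num) (by norm_num)
        (by norm_num [Ppoly, Epoly]) h3 h4
    rcases le_total s 0.7097 with h5 | h5
    · exact step_lemma 0.6889 0.7097 (by norm_num) (by norm_num) (by norm_num)
        (by norm_num [Ppoly, Epoly]) h4 h5
    rcases le_total s 0.718 with h6 | h6
    · exact step_lemma 0.7097 0.718 (by norm_num) (by norm_num) (by norm_num)
        (by norm_num [Ppoly, Epoly]) h5 h6
    rcases le_total s 0.7211 with h7 | h7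
    · exact step_lemma 0.718 0.7211 (by norm_num) (by norm_num) (by norm_num)
        (by norm_num [Ppoly, Epoly]) h6 h7
    rcases le_total s 0.7222 with h8 | h8
    · exact step_lemma 0.7211 0.7222 (by norm_num) (by norm_num) (by norm_num)
        (by norm_num [Ppoly, Epoly]) h7 h8
    · exact step_lemma 0.7222 0.7226 (by norm_num) (by norm_num) (by norm_num)
        (by norm_num [Ppoly, Epoly]) h8 h1

theorem log_cos_ge (x : ℝ) (hx : |x| ≤ 0.23) :
    Real.log (Real.cos (2 * Real.pi * x)) ≥ -4 * Real.pi ^ 2 * x ^ 2 := by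
  have hpi := Real.pi_pos
  set s : ℝ := Real.pi * |x| with hsdef
  have hs0 : 0 ≤ s := by positivity
  have hs1 : s ≤ 0.7226 := by nlinarith [Real.pi_lt_d6, abs_nonneg x]
  have hs1' : s ≤ 1 := by linarith
  have hcos_eq : Real.cos (2 * Real.pi * x) = Real.cos (2 * s) := by
    rw [← Real.cos_abs (2 * Real.pi * x), ← Real.cos_abs (2 * s)]
    congr 1
    rw [abs_mul, abs_mul, abs_of_nonneg hpi.le, hsdef,
      abs_of_nonneg (by positivity : (0:ℝ) ≤ 2 * (Real.pi * |x|))]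
    norm_num
    ring
  -- sin bound
  have hsinle : Real.sin s ≤ Ppoly s := by
    have h := my_sin_bound (x := s) (by rwa [abs_of_nonneg hs0])
    rw [abs_of_nonneg hs0] at h
    have := abs_le.1 h
    unfold Ppoly
    linarith [this.2]
  have hsin0 : 0 ≤ Real.sin s :=
    Real.sin_nonneg_of_nonneg_of_le_pi hs0 (by nlinarith [Real.pi_gt_three])
  have hp0 : 0 ≤ Ppoly s := Ppoly_nonneg hs0 hs1'
  have hcosl : 1 - 2 * Ppoly s ^ 2 ≤ Real.cos (2 * s) := by
    have hc2 : Real.cos (2 * s) = 1 - 2 * Real.sin s ^ 2 := by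
      rw [Real.cos_two_mul, Real.cos_sq']; ring
    rw [hc2]
    nlinarith
  have hkey := key_all hs0 hs1
  have hEpos : 0 < Epoly (4 * s ^ 2) := Epoly_pos (by positivity)
  have hA0 : 0 < 1 - 2 * Ppoly s ^ 2 := by
    by_contra hcon
    push_neg at hcon
    nlinarith
  have hexp : Epoly (4 * s ^ 2) ≤ Real.exp (4 * s ^ 2) := Epoly_le_exp (by positivity)
  have h2 : 1 ≤ Real.cos (2 * s) * Real.exp (4 * s ^ 2) :=
    hkey.trans (mul_le_mul hcosl hexp hEpos.le (by linarith))
  have h3 : Real.exp (-(4 * s ^ 2)) ≤ Real.cos (2 * s) := by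
    have hmul : Real.exp (-(4 * s ^ 2)) * Real.exp (4 * s ^ 2) = 1 := by
      rw [← Real.exp_add]; simp
    nlinarith [Real.exp_pos (4 * s ^ 2), Real.exp_pos (-(4 * s ^ 2))]
  have h4 : -(4 * s ^ 2) ≤ Real.log (Real.cos (2 * s)) := by
    calc -(4 * s ^ 2) = Real.log (Real.exp (-(4 * s ^ 2))) := (Real.log_exp _).symm
      _ ≤ _ := Real.log_le_log (Real.exp_pos _) h3
  rw [ge_iff_le, hcos_eq]
  have hsq : s ^ 2 = Real.pi ^ 2 * x ^ 2 := by
    rw [hsdef, mul_pow, sq_abs]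
  nlinarith [h4]
end

section
/- Let P and Q be probability distributions on a finite set S such that for all x ∈ S, |P(x) − Q(x)| ≤ δ(x)·P(x) with δ(x) ≤ 1/4. Then the Kullback–Leibler divergence satisfies D_KL(P‖Q) ≤ 2·Σ_{x∈S} δ(x)² P(x). -/
open Finset

/-- `log (1+x) ≥ x - 2x²` for `x ≥ -1/4`. -/
lemma log_one_add_ge (x : ℝ) (hx : -(1/4 : ℝ) ≤ x) :
    x - 2 * x ^ 2 ≤ Real.log (1 + x) := by
  set t : ℝ := x - 2 * x ^ 2 with ht
  have hx1 : (0:ℝ) < 1 + x := by nlinarith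
  have h1t : (0:ℝ) < 1 - t := by nlinarith
  have hineq : 1 - t ≤ Real.exp (-t) := by
    have := Real.add_one_le_exp (-t); linarith
  have h2 : (1 - t) * Real.exp t ≤ 1 := by
    have hmul : Real.exp (-t) * Real.exp t = 1 := by
      rw [← Real.exp_add]; simp
    nlinarith [Real.exp_pos t]
  have h3 : (1:ℝ) ≤ (1 + x) * (1 - t) := by nlinarith
  have h4 : Real.exp t ≤ 1 + x := by nlinarith [Real.exp_pos t]
  calc t = Real.log (Real.exp t) := (Real.log_exp t).symm
    _ ≤ Real.log (1 + x) := Real.log_le_log (Real.exp_pos t) h4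

/-- KL divergence bound: if `|P x − Q x| ≤ δ x · P x` with `δ x ≤ 1/4`, then
`D_KL(P‖Q) ≤ 2 Σ δ(x)² P(x)`. -/
theorem kl_le_of_close {S : Type*} [Fintype S] (P Q δ : S → ℝ)
    (hP : ∀ x, 0 ≤ P x) (hQ : ∀ x, 0 ≤ Q x)
    (hPsum : ∑ x, P x = 1) (hQsum : ∑ x, Q x = 1)
    (hδ : ∀ x, δ x ≤ 1 / 4)
    (hclose : ∀ x, |P x - Q x| ≤ δ x * P x) :
    ∑ x, Real.log (P x / Q x) * P x ≤ 2 * ∑ x, δ x ^ 2 * P x := by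
  have key : ∀ x, Real.log (P x / Q x) * P x ≤ (P x - Q x) + 2 * (δ x ^ 2 * P x) := by
    intro x
    rcases (hP x).eq_or_lt with h0 | hPx
    · have hQ0 : Q x = 0 := by
        have := hclose x
        rw [← h0] at this
        obtain ⟨ha, hb⟩ := abs_le.mp this
        have := hQ x
        linarith
      rw [← h0, hQ0]; simp
    · have habs := abs_le.mp (hclose x)
      have hδx : 0 ≤ δ x := by
        nlinarith [abs_nonneg (P x - Q x), hclose x]
      have hδ4 := hδ x
      have hQx : 0 < Q x := by nlinarith [habs.1, habs.2]
      set ε : ℝ := (Q x - P x) / P x with hε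
      have hεb : |ε| ≤ δ x := by
        rw [hε, abs_div, abs_of_pos hPx, div_le_iff₀ hPx]
        rw [abs_sub_comm]
        exact hclose x
      have hεlb : -(1/4 : ℝ) ≤ ε := by
        have := (abs_le.mp hεb).1; linarith
      have h1 : 1 + ε = Q x / P x := by rw [hε]; field_simp; ring
      have hlog : Real.log (P x / Q x) = - Real.log (1 + ε) := by
        rw [h1, ← Real.log_inv, inv_div]
      have hl := log_one_add_ge ε hεlb
      have hε2 : ε ^ 2 ≤ δ x ^ 2 := by
        have := abs_nonneg ε
        nlinarith [sq_abs ε]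
      have hεP : ε * P x = Q x - P x := by rw [hε]; field_simp
      rw [hlog]
      have : -Real.log (1 + ε) ≤ -ε + 2 * ε ^ 2 := by linarith
      calc -Real.log (1 + ε) * P x ≤ (-ε + 2 * ε ^ 2) * P x := by
            apply mul_le_mul_of_nonneg_right this (hP x)
        _ = -(ε * P x) + 2 * (ε ^ 2 * P x) := by ring
        _ ≤ (P x - Q x) + 2 * (δ x ^ 2 * P x) := by
            rw [hεP]
            have : ε ^ 2 * P x ≤ δ x ^ 2 * P x :=
              mul_le_mul_of_nonneg_right hε2 (hP x)
            linarith
  calc ∑ x, Real.log (P x / Q x) * P x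
      ≤ ∑ x, ((P x - Q x) + 2 * (δ x ^ 2 * P x)) :=
        Finset.sum_le_sum fun x _ => key x
    _ = (∑ x, P x - ∑ x, Q x) + 2 * ∑ x, δ x ^ 2 * P x := by
        rw [Finset.sum_add_distrib, Finset.sum_sub_distrib, ← Finset.mul_sum]
    _ = 2 * ∑ x, δ x ^ 2 * P x := by rw [hPsum, hQsum]; ring
end

section
/- Let Λ be a one-dimensional lattice in ℝ. Then E_{x ∼ D_Λ}[‖x‖²] ≤ 1/(2π), where D_Λ is the discrete Gaussian on Λ with parameter 1. -/
open scoped Real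
open Real Filter Topology

noncomputable def Fth (t : ℝ) : ℝ := ∑' k : ℤ, Real.exp (-π * t * (k:ℝ)^2)
noncomputable def Sth (t : ℝ) : ℝ := ∑' k : ℤ, (k:ℝ)^2 * Real.exp (-π * t * (k:ℝ)^2)

lemma summable_Fth {t : ℝ} (ht : 0 < t) : Summable (fun k : ℤ => Real.exp (-π * t * (k:ℝ)^2)) := by
  have := summable_pow_mul_jacobiTheta₂_term_bound 0 ht 0
  simpa [mul_assoc] using this

lemma summable_Sth {t : ℝ} (ht : 0 < t) :
    Summable (fun k : ℤ => (k:ℝ)^2 * Real.exp (-π * t * (k:ℝ)^2)) := by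
  have := summable_pow_mul_jacobiTheta₂_term_bound 0 ht 2
  simpa [sq_abs, mul_assoc] using this

lemma Fth_pos {t : ℝ} (ht : 0 < t) : 0 < Fth t :=
  calc (0:ℝ) < Real.exp (-π * t * ((0:ℤ):ℝ)^2) := Real.exp_pos _
    _ ≤ Fth t := Summable.le_tsum (summable_Fth ht) 0 (fun _ _ => (Real.exp_pos _).le)

lemma Sth_nonneg (t : ℝ) : 0 ≤ Sth t :=
  tsum_nonneg fun k => by positivity

lemma Fth_anti {s t : ℝ} (hs : 0 < s) (hst : s ≤ t) : Fth t ≤ Fth s := by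
  refine Summable.tsum_le_tsum (fun k => ?_) (summable_Fth (hs.trans_le hst)) (summable_Fth hs)
  apply Real.exp_le_exp.2
  nlinarith [sq_nonneg ((k:ℝ)), Real.pi_pos, mul_nonneg (mul_nonneg Real.pi_pos.le
    (sub_nonneg.2 hst)) (sq_nonneg ((k:ℝ)))]

lemma Fth_funct {t : ℝ} (ht : 0 < t) : Real.sqrt t * Fth t = Fth (1/t) := by
  have h := Real.tsum_exp_neg_mul_int_sq ht
  have h2 : Fth t = 1 / Real.sqrt t * Fth (1/t) := by
    rw [Real.sqrt_eq_rpow]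
    have heq : ∀ k : ℤ, -π / t * (k:ℝ)^2 = -π * (1/t) * (k:ℝ)^2 := fun k => by ring
    simp_rw [Fth, h, heq]
  rw [h2]
  have hst : Real.sqrt t ≠ 0 := by positivity
  field_simp

lemma key_ineq {t : ℝ} (ht : 0 < t) : t * Sth t ≤ Fth t / (2 * π) := by
  have hπ := Real.pi_pos
  have hts : (0:ℝ) < Real.sqrt t := Real.sqrt_pos.2 ht
  have hbound : ∀ s ∈ Set.Ioo 0 t,
      t * Sth t ≤ Fth t * (t / (π * Real.sqrt s * (Real.sqrt t + Real.sqrt s))) := by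
    intro s hs
    obtain ⟨hs0, hst⟩ := hs
    have hss : (0:ℝ) < Real.sqrt s := Real.sqrt_pos.2 hs0
    -- termwise tangent inequality
    have h1 : π * (t - s) * Sth t ≤ Fth s - Fth t := by
      have hsum : Summable (fun k : ℤ =>
          Real.exp (-π * s * (k:ℝ)^2) - Real.exp (-π * t * (k:ℝ)^2)) :=
        (summable_Fth hs0).sub (summable_Fth ht)
      have hterm : ∀ k : ℤ, π * (t - s) * ((k:ℝ)^2 * Real.exp (-π * t * (k:ℝ)^2)) ≤
          Real.exp (-π * s * (k:ℝ)^2) - Real.exp (-π * t * (k:ℝ)^2) := by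
        intro k
        have hx := Real.add_one_le_exp (π * (t - s) * (k:ℝ)^2)
        have hexp : Real.exp (-π * s * (k:ℝ)^2) =
            Real.exp (π * (t - s) * (k:ℝ)^2) * Real.exp (-π * t * (k:ℝ)^2) := by
          rw [← Real.exp_add]; ring_nf
        rw [hexp]
        nlinarith [Real.exp_pos (-π * t * (k:ℝ)^2)]
      calc π * (t - s) * Sth t
          = ∑' k : ℤ, π * (t - s) * ((k:ℝ)^2 * Real.exp (-π * t * (k:ℝ)^2)) := by
            rw [Sth, tsum_mul_left]
        _ ≤ ∑' k : ℤ, (Real.exp (-π * s * (k:ℝ)^2) - Real.exp (-π * t * (k:ℝ)^2)) :=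
            Summable.tsum_le_tsum hterm ((summable_Sth ht).mul_left _) hsum
        _ = Fth s - Fth t := by
            rw [Summable.tsum_sub (summable_Fth hs0) (summable_Fth ht)]; rfl
    -- monotonicity of √t F(t)
    have h2 : Real.sqrt s * Fth s ≤ Real.sqrt t * Fth t := by
      rw [Fth_funct hs0, Fth_funct ht]
      exact Fth_anti (by positivity) (one_div_le_one_div_of_le hs0 hst.le)
    have hFs : Fth s ≤ Real.sqrt t / Real.sqrt s * Fth t := by
      rw [div_mul_eq_mul_div, le_div_iff₀ hss]
      nlinarith
    have hts2 : t - s = (Real.sqrt t - Real.sqrt s) * (Real.sqrt t + Real.sqrt s) := by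
      have e1 : Real.sqrt t ^ 2 = t := Real.sq_sqrt ht.le
      have e2 : Real.sqrt s ^ 2 = s := Real.sq_sqrt hs0.le
      nlinarith
    have hFt := (Fth_pos ht).le
    have h3 : π * (t - s) * Sth t * Real.sqrt s ≤ Fth t * (Real.sqrt t - Real.sqrt s) := by
      have : Fth s - Fth t ≤ Fth t * (Real.sqrt t - Real.sqrt s) / Real.sqrt s := by
        have : Real.sqrt t / Real.sqrt s * Fth t - Fth t
            = Fth t * (Real.sqrt t - Real.sqrt s) / Real.sqrt s := by field_simp
        linarith [hFs, this.le]
      rw [← le_div_iff₀ hss]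
      linarith
    have hd : (0:ℝ) < Real.sqrt t - Real.sqrt s :=
      sub_pos.2 (Real.sqrt_lt_sqrt hs0.le hst)
    have h5 : π * (Real.sqrt t + Real.sqrt s) * Sth t * Real.sqrt s ≤ Fth t := by
      rw [hts2] at h3
      nlinarith
    have hdenom : (0:ℝ) < π * Real.sqrt s * (Real.sqrt t + Real.sqrt s) := by positivity
    rw [show Fth t * (t / (π * Real.sqrt s * (Real.sqrt t + Real.sqrt s)))
        = Fth t * t / (π * Real.sqrt s * (Real.sqrt t + Real.sqrt s)) from by ring,
      le_div_iff₀ hdenom]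
    nlinarith [mul_le_mul_of_nonneg_right h5 ht.le]
  -- pass to the limit s → t⁻
  have hne : (𝓝[Set.Ioo 0 t] t).NeBot := right_nhdsWithin_Ioo_neBot ht
  have hc : Tendsto (fun s : ℝ => Fth t * (t / (π * Real.sqrt s * (Real.sqrt t + Real.sqrt s))))
      (𝓝[Set.Ioo 0 t] t) (𝓝 (Fth t * (t / (π * Real.sqrt t * (Real.sqrt t + Real.sqrt t))))) := by
    apply ContinuousAt.continuousWithinAt
    have h1 : ContinuousAt (fun s : ℝ => π * Real.sqrt s * (Real.sqrt t + Real.sqrt s)) t := by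
      fun_prop
    exact continuousAt_const.mul (continuousAt_const.div h1 (by positivity))
  have hval : Fth t * (t / (π * Real.sqrt t * (Real.sqrt t + Real.sqrt t))) = Fth t / (2 * π) := by
    have : Real.sqrt t * Real.sqrt t = t := Real.mul_self_sqrt ht.le
    rw [show π * Real.sqrt t * (Real.sqrt t + Real.sqrt t) = 2 * π * (Real.sqrt t * Real.sqrt t)
      from by ring, this]
    field_simp
  rw [hval] at hc
  exact ge_of_tendsto hc (eventually_nhdsWithin_of_forall hbound)

/-- For a one-dimensional lattice `Λ = aℤ ⊂ ℝ`,
`E_{x ∼ D_Λ}[‖x‖²] ≤ 1/(2π)`. -/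
theorem discrete_gaussian_second_moment (a : ℝ) (ha : a ≠ 0) :
    (∑' k : ℤ, ((k : ℝ) * a) ^ 2 * Real.exp (-π * ((k : ℝ) * a) ^ 2))
      / (∑' k : ℤ, Real.exp (-π * ((k : ℝ) * a) ^ 2)) ≤ 1 / (2 * π) := by
  have ht : (0:ℝ) < a ^ 2 := by positivity
  have he : ∀ k : ℤ, -π * ((k:ℝ) * a) ^ 2 = -π * a ^ 2 * (k:ℝ)^2 := fun k => by ring
  have hnum : (∑' k : ℤ, ((k : ℝ) * a) ^ 2 * Real.exp (-π * ((k : ℝ) * a) ^ 2))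
      = a ^ 2 * Sth (a ^ 2) := by
    rw [Sth, ← tsum_mul_left]
    congr 1; funext k; rw [he]; ring
  have hden : (∑' k : ℤ, Real.exp (-π * ((k : ℝ) * a) ^ 2)) = Fth (a ^ 2) := by
    rw [Fth]; congr 1; funext k; rw [he]
  rw [hnum, hden, div_le_iff₀ (Fth_pos ht)]
  have := key_ineq ht
  have hπ := Real.pi_pos
  calc a ^ 2 * Sth (a ^ 2) ≤ Fth (a ^ 2) / (2 * π) := key_ineq ht
    _ = 1 / (2 * π) * Fth (a ^ 2) := by ring
end

section
/- The volume of the intersection of two Euclidean unit balls in ℝⁿ whose centers are at distance d ≤ 1, divided by the volume of one unit ball, is at least (d/3)·(1−d²)^{(n−1)/2}·√n, and in particular at least (d/3)·(1−d²)^{n/2}. -/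
open MeasureTheory Real

lemma gamma_half_le' {a : ℝ} (ha : 0 < a) :
    Real.Gamma (a + 1/2) ≤ Real.Gamma (a+1) / Real.sqrt a := by
  have h1 : (0:ℝ) < a + 1 := by linarith
  have hm : a + 1/2 = (1/2 : ℝ) • a + (1/2 : ℝ) • (a+1) := by
    simp [smul_eq_mul]; ring
  have hc := Real.convexOn_log_Gamma.2 (Set.mem_Ioi.2 ha) (Set.mem_Ioi.2 h1)
    (by norm_num : (0:ℝ) ≤ 1/2) (by norm_num : (0:ℝ) ≤ 1/2) (by norm_num)
  rw [← hm] at hc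
  simp only [Function.comp_apply, smul_eq_mul] at hc
  have hga := Real.Gamma_pos_of_pos ha
  have hga1 := Real.Gamma_pos_of_pos h1
  have hgh := Real.Gamma_pos_of_pos (by linarith : (0:ℝ) < a + 1/2)
  have key := Real.exp_le_exp.2 hc
  rw [Real.exp_log hgh] at key
  have he : Real.exp (1/2 * Real.log (Real.Gamma a) + 1/2 * Real.log (Real.Gamma (a+1)))
      = Real.sqrt (Real.Gamma a) * Real.sqrt (Real.Gamma (a+1)) := by
    rw [Real.exp_add, Real.sqrt_eq_rpow, Real.sqrt_eq_rpow,
      Real.rpow_def_of_pos hga, Real.rpow_def_of_pos hga1]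
    ring_nf
  rw [he] at key
  have hrec : Real.Gamma (a+1) = a * Real.Gamma a := Real.Gamma_add_one (ne_of_gt ha)
  have heq : Real.sqrt (Real.Gamma a) * Real.sqrt (Real.Gamma (a+1))
      = Real.Gamma (a+1) / Real.sqrt a := by
    rw [← Real.sqrt_mul (le_of_lt hga),
      show Real.Gamma a * Real.Gamma (a+1) = Real.Gamma (a+1) ^ 2 / a by
        rw [hrec]; field_simp,
      Real.sqrt_div (sq_nonneg _), Real.sqrt_sq (le_of_lt hga1)]
  linarith [heq ▸ key]

lemma key_gamma' (n : ℕ) (hn : 1 ≤ n) :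
    Real.sqrt π * Real.sqrt n * Real.Gamma (((n:ℝ)+1)/2) ≤ 3 * Real.Gamma ((n:ℝ)/2+1) := by
  have hn0 : (0:ℝ) < n := by exact_mod_cast hn
  have ha : (0:ℝ) < (n:ℝ)/2 := by linarith
  have h := gamma_half_le' ha
  have hG := Real.Gamma_pos_of_pos (by linarith : (0:ℝ) < (n:ℝ)/2 + 1)
  have hrw : ((n:ℝ)+1)/2 = (n:ℝ)/2 + 1/2 := by ring
  rw [hrw]
  have hs : Real.sqrt ((n:ℝ)/2) > 0 := Real.sqrt_pos.2 ha
  have h2 : Real.sqrt π * Real.sqrt n * Real.Gamma ((n:ℝ)/2 + 1/2)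
      ≤ Real.sqrt π * Real.sqrt n * (Real.Gamma ((n:ℝ)/2+1) / Real.sqrt ((n:ℝ)/2)) := by
    apply mul_le_mul_of_nonneg_left h
    positivity
  refine h2.trans ?_
  have hsq : Real.sqrt (n:ℝ) / Real.sqrt ((n:ℝ)/2) = Real.sqrt 2 := by
    rw [← Real.sqrt_div hn0.le]
    congr 1
    field_simp
  have hfin : Real.sqrt π * Real.sqrt n * (Real.Gamma ((n:ℝ)/2+1) / Real.sqrt ((n:ℝ)/2))
      = (Real.sqrt π * Real.sqrt 2) * Real.Gamma ((n:ℝ)/2+1) := by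
    rw [← hsq]; ring
  rw [hfin]
  have h3 : Real.sqrt π * Real.sqrt 2 ≤ 3 := by
    rw [← Real.sqrt_mul Real.pi_pos.le]
    have : π * 2 ≤ 9 := by nlinarith [Real.pi_lt_d2]
    calc Real.sqrt (π * 2) ≤ Real.sqrt 9 := Real.sqrt_le_sqrt this
      _ = 3 := by rw [show (9:ℝ) = 3^2 by norm_num, Real.sqrt_sq (by norm_num : (0:ℝ) ≤ 3)]
  exact mul_le_mul_of_nonneg_right h3 hG.le

/-- The cylinder contained in the intersection of the two balls. -/
def interBallsCyl (m : ℕ) (d : ℝ) : Set (EuclideanSpace ℝ (Fin (m+1))) :=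
  {x | x 0 ∈ Set.Ioo 0 d ∧ ∑ i : Fin m, x (Fin.succ i) ^ 2 < 1 - d^2}

lemma interBallsCyl_subset {m : ℕ} (d : ℝ) (hd0 : 0 < d) (hd1 : d ≤ 1) :
    interBallsCyl m d ⊆ Metric.ball (0 : EuclideanSpace ℝ (Fin (m+1))) 1 ∩
      Metric.ball (d • EuclideanSpace.single (0 : Fin (m+1)) (1:ℝ)) 1 := by
  rintro x ⟨⟨hx0, hxd⟩, hsum⟩
  have hlt1 : ∀ t : ℝ, 0 ≤ t → t < 1 → Real.sqrt t < 1 := by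
    intro t ht ht1
    calc Real.sqrt t < Real.sqrt 1 := Real.sqrt_lt_sqrt ht ht1
      _ = 1 := Real.sqrt_one
  have hnn : (0:ℝ) ≤ ∑ i : Fin m, x (Fin.succ i) ^ 2 :=
    Finset.sum_nonneg fun i _ => sq_nonneg _
  constructor
  · rw [Metric.mem_ball, EuclideanSpace.dist_eq]
    have h1 : ∑ i : Fin (m+1), dist (x i) ((0 : EuclideanSpace ℝ (Fin (m+1))) i) ^ 2
        = x 0 ^ 2 + ∑ i : Fin m, x (Fin.succ i) ^ 2 := by
      simp [Fin.sum_univ_succ, Real.dist_eq, sq_abs]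
    rw [h1]
    apply hlt1
    · positivity
    · nlinarith
  · rw [Metric.mem_ball, EuclideanSpace.dist_eq]
    have he : ∀ i : Fin (m+1),
        (d • EuclideanSpace.single (0 : Fin (m+1)) (1:ℝ)) i
          = if i = 0 then d else 0 := by
      intro i
      simp [EuclideanSpace.single_apply]
    have h1 : ∑ i : Fin (m+1),
        dist (x i) ((d • EuclideanSpace.single (0 : Fin (m+1)) (1:ℝ)) i) ^ 2
        = (x 0 - d) ^ 2 + ∑ i : Fin m, x (Fin.succ i) ^ 2 := by
      rw [Fin.sum_univ_succ]
      congr 1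
      · rw [he 0, Real.dist_eq, sq_abs]; simp
      · apply Finset.sum_congr rfl
        intro i _
        rw [he _, Real.dist_eq, sq_abs]
        simp [Fin.succ_ne_zero]
    rw [h1]
    apply hlt1
    · positivity
    · nlinarith

lemma volume_interBallsCyl (m : ℕ) (d : ℝ) :
    volume (interBallsCyl m d) = ENNReal.ofReal d *
      volume (Metric.ball (0 : EuclideanSpace ℝ (Fin m)) (Real.sqrt (1 - d^2))) := by
  set T : Set (Fin m → ℝ) := {z | ∑ i : Fin m, z i ^ 2 < 1 - d^2} with hT
  have hTmeas : MeasurableSet T := by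
    have : Measurable fun z : Fin m → ℝ => ∑ i : Fin m, z i ^ 2 := by
      apply Finset.measurable_sum
      intro i _
      exact (measurable_pi_apply i).pow_const 2
    exact measurableSet_lt this measurable_const
  have hstep1 : interBallsCyl m d = ((MeasurableEquiv.toLp 2 (Fin (m+1) → ℝ)).symm) ⁻¹'
      ((MeasurableEquiv.piFinSuccAbove (fun _ => ℝ) 0) ⁻¹' (Set.Ioo 0 d ×ˢ T)) := by
    ext x
    simp only [interBallsCyl, Set.mem_setOf_eq, Set.mem_preimage, Set.mem_prod,
      MeasurableEquiv.piFinSuccAbove, MeasurableEquiv.coe_mk,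
      Fin.insertNthEquiv, Equiv.coe_fn_symm_mk, hT]
    constructor
    · rintro ⟨h1, h2⟩
      exact ⟨h1, by simpa [Fin.removeNth, Fin.zero_succAbove] using h2⟩
    · rintro ⟨h1, h2⟩
      exact ⟨h1, by simpa [Fin.removeNth, Fin.zero_succAbove] using h2⟩
  rw [hstep1]
  rw [(EuclideanSpace.volume_preserving_symm_measurableEquiv_toLp (Fin (m+1))).measure_preimage ?_]
  · rw [(volume_preserving_piFinSuccAbove (fun _ : Fin (m+1) => ℝ) 0).measure_preimage ?_]
    · rw [MeasureTheory.Measure.volume_eq_prod, Measure.prod_prod, Real.volume_Ioo]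
      congr 1
      · congr 1; ring
      · have hball : Metric.ball (0 : EuclideanSpace ℝ (Fin m)) (Real.sqrt (1 - d^2))
            = ((MeasurableEquiv.toLp 2 (Fin m → ℝ)).symm) ⁻¹' T := by
          ext x
          simp only [Metric.mem_ball, Set.mem_preimage, hT, Set.mem_setOf_eq]
          rw [EuclideanSpace.dist_eq]
          have : ∀ i, dist (x i) ((0 : EuclideanSpace ℝ (Fin m)) i) = |x i| := by
            intro i; simp [Real.dist_eq]
          simp_rw [this, sq_abs]
          rw [show ((MeasurableEquiv.toLp 2 (Fin m → ℝ)).symm) x = fun i => x i from rfl]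
          exact Real.sqrt_lt_sqrt_iff (Finset.sum_nonneg fun i _ => sq_nonneg _)
        rw [hball, (EuclideanSpace.volume_preserving_symm_measurableEquiv_toLp (Fin m)).measure_preimage
          hTmeas.nullMeasurableSet]
    · exact (measurableSet_Ioo.prod hTmeas).nullMeasurableSet
  · exact ((MeasurableEquiv.piFinSuccAbove (fun _ => ℝ) 0).measurable
      (measurableSet_Ioo.prod hTmeas)).nullMeasurableSet

lemma volume_inter_balls_eq (m : ℕ) (c₁ c₂ : EuclideanSpace ℝ (Fin (m+1))) (d : ℝ)
    (hd0 : 0 ≤ d) (hdist : dist c₁ c₂ = d) :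
    volume (Metric.ball c₁ 1 ∩ Metric.ball c₂ 1)
      = volume (Metric.ball (0 : EuclideanSpace ℝ (Fin (m+1))) 1 ∩
          Metric.ball (d • EuclideanSpace.single (0 : Fin (m+1)) (1:ℝ)) 1) := by
  set w : EuclideanSpace ℝ (Fin (m+1)) := d • EuclideanSpace.single (0 : Fin (m+1)) (1:ℝ) with hw
  set v : EuclideanSpace ℝ (Fin (m+1)) := c₂ - c₁ with hv
  have hnv : ‖v‖ = d := by rw [hv, ← dist_eq_norm, dist_comm]; exact hdist
  have hnw : ‖w‖ = d := by
    rw [hw, norm_smul, EuclideanSpace.norm_single, norm_one, mul_one, Real.norm_eq_abs,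
      abs_of_nonneg hd0]
  set R := Submodule.reflection (ℝ ∙ (v - w))ᗮ with hR
  have hRv : R v = w := Submodule.reflection_sub (by rw [hnv, hnw])
  set Φ : EuclideanSpace ℝ (Fin (m+1)) → EuclideanSpace ℝ (Fin (m+1)) :=
    fun x => R (x - c₁) with hΦ
  have hmp : MeasurePreserving Φ volume volume := by
    exact (LinearIsometryEquiv.measurePreserving R).comp
      (measurePreserving_sub_right volume c₁)
  have hpre : Φ ⁻¹' (Metric.ball (0 : EuclideanSpace ℝ (Fin (m+1))) 1 ∩ Metric.ball w 1)
      = Metric.ball c₁ 1 ∩ Metric.ball c₂ 1 := by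
    ext x
    simp only [Set.mem_preimage, Set.mem_inter_iff, Metric.mem_ball]
    have h1 : dist (Φ x) 0 = dist x c₁ := by
      rw [hΦ]
      simp only
      rw [show (0 : EuclideanSpace ℝ (Fin (m+1))) = R 0 by simp, R.dist_map]
      simp [dist_eq_norm]
    have h2 : dist (Φ x) w = dist x c₂ := by
      rw [hΦ]
      simp only
      rw [← hRv, R.dist_map, dist_eq_norm, dist_eq_norm, hv]
      congr 1
      abel
    rw [h1, h2]
  rw [← hpre, hmp.measure_preimage
    ((measurableSet_ball.inter measurableSet_ball).nullMeasurableSet)]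

-- second conjunct
lemma partB (n : ℕ) (hn : 1 ≤ n) (d : ℝ) (hd0 : 0 ≤ d) (hd1 : d ≤ 1) :
    d / 3 * (1 - d ^ 2) ^ (((n : ℝ) - 1) / 2) * Real.sqrt n
      ≥ d / 3 * (1 - d ^ 2) ^ ((n : ℝ) / 2) := by
  have hn1 : (1:ℝ) ≤ n := by exact_mod_cast hn
  have h3 : 1 ≤ Real.sqrt n := by
    rw [show (1:ℝ) = Real.sqrt 1 by rw [Real.sqrt_one]]
    exact Real.sqrt_le_sqrt hn1
  rcases eq_or_lt_of_le hd1 with h1 | h1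
  · subst h1
    have hz : (1:ℝ) - 1^2 = 0 := by ring
    rw [hz, Real.zero_rpow (ne_of_gt (by linarith : (0:ℝ) < (n:ℝ)/2))]
    have h0 : (0:ℝ) ≤ (0:ℝ) ^ (((n:ℝ) - 1)/2) := Real.rpow_nonneg le_rfl _
    have hs0 : (0:ℝ) ≤ Real.sqrt n := Real.sqrt_nonneg _
    rw [mul_zero]
    exact mul_nonneg (mul_nonneg (by norm_num) h0) hs0
  · have hx : 0 < 1 - d^2 := by nlinarith
    have hx1 : 1 - d^2 ≤ 1 := by nlinarith
    have h2 : (1-d^2) ^ ((n:ℝ)/2) ≤ (1-d^2) ^ (((n:ℝ)-1)/2) :=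
      Real.rpow_le_rpow_of_exponent_ge hx hx1 (by linarith)
    have hA : (0:ℝ) ≤ (1-d^2) ^ (((n:ℝ)-1)/2) := Real.rpow_nonneg hx.le _
    calc d / 3 * (1 - d ^ 2) ^ ((n : ℝ) / 2)
        ≤ d / 3 * (1 - d ^ 2) ^ (((n : ℝ) - 1) / 2) :=
          mul_le_mul_of_nonneg_left h2 (by positivity)
      _ ≤ d / 3 * (1 - d ^ 2) ^ (((n : ℝ) - 1) / 2) * Real.sqrt n :=
          le_mul_of_one_le_right (by positivity) h3

-- main case
lemma partA_main (m : ℕ) (hm : 1 ≤ m) (c₁ c₂ : EuclideanSpace ℝ (Fin (m+1))) (d : ℝ)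
    (hd0 : 0 < d) (hd1 : d < 1) (hdist : dist c₁ c₂ = d) :
    (volume (Metric.ball c₁ 1 ∩ Metric.ball c₂ 1)).toReal
        / (volume (Metric.ball c₁ 1)).toReal
      ≥ d / 3 * (1 - d ^ 2) ^ ((((m+1) : ℝ) - 1) / 2) * Real.sqrt (m+1) := by
  haveI : Nonempty (Fin m) := ⟨⟨0, hm⟩⟩
  have hx : (0:ℝ) < 1 - d^2 := by nlinarith
  set r : ℝ := Real.sqrt (1 - d^2) with hr
  have hrpos : 0 < r := Real.sqrt_pos.2 hx
  set Sπ : ℝ := Real.sqrt π with hSπ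
  have hSπpos : 0 < Sπ := Real.sqrt_pos.2 Real.pi_pos
  set Gm : ℝ := Real.Gamma ((m:ℝ)/2 + 1) with hGm
  set Gn : ℝ := Real.Gamma (((m:ℝ)+1)/2 + 1) with hGn
  have hGmpos : 0 < Gm := Real.Gamma_pos_of_pos (by positivity)
  have hGnpos : 0 < Gn := Real.Gamma_pos_of_pos (by positivity)
  -- volumes
  have hVball : volume (Metric.ball c₁ (1:ℝ)) = ENNReal.ofReal (Sπ ^ (m+1) / Gn) := by
    rw [EuclideanSpace.volume_ball]
    simp only [Fintype.card_fin, ENNReal.ofReal_one, one_pow, one_mul]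
    rw [hGn, hSπ]
    congr 3
    push_cast
    ring
  have hVsmall : volume (Metric.ball (0 : EuclideanSpace ℝ (Fin m)) r)
      = ENNReal.ofReal r ^ m * ENNReal.ofReal (Sπ ^ m / Gm) := by
    rw [EuclideanSpace.volume_ball]
    simp only [Fintype.card_fin]
    rw [hSπ, hGm]
  -- inequality of measures
  have hsub := interBallsCyl_subset (m := m) d hd0 hd1.le
  have hle : volume (interBallsCyl m d) ≤ volume (Metric.ball c₁ 1 ∩ Metric.ball c₂ 1) := by
    rw [volume_inter_balls_eq m c₁ c₂ d hd0.le hdist]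
    exact measure_mono hsub
  rw [volume_interBallsCyl, ← hr, hVsmall] at hle
  -- to real numbers
  have hfin : volume (Metric.ball c₁ 1 ∩ Metric.ball c₂ 1) ≠ ⊤ := by
    apply ne_of_lt
    calc volume (Metric.ball c₁ 1 ∩ Metric.ball c₂ 1) ≤ volume (Metric.ball c₁ (1:ℝ)) :=
          measure_mono Set.inter_subset_left
      _ < ⊤ := by rw [hVball]; exact ENNReal.ofReal_lt_top
  have htoReal : d * (r ^ m * (Sπ ^ m / Gm))
      ≤ (volume (Metric.ball c₁ 1 ∩ Metric.ball c₂ 1)).toReal := by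
    have h := ENNReal.toReal_mono hfin hle
    rw [ENNReal.toReal_mul, ENNReal.toReal_mul, ENNReal.toReal_pow,
      ENNReal.toReal_ofReal hd0.le, ENNReal.toReal_ofReal hrpos.le,
      ENNReal.toReal_ofReal (by positivity)] at h
    linarith
  rw [hVball, ENNReal.toReal_ofReal (by positivity)]
  have hkey := key_gamma' (m+1) (by omega)
  have hkeyn : Sπ * Real.sqrt ((m:ℝ)+1) * Gm ≤ 3 * Gn := by
    have h1 : ((m+1:ℕ):ℝ) = (m:ℝ) + 1 := by push_cast; ring
    rw [h1] at hkey
    have h2 : ((m:ℝ)+1+1)/2 = (m:ℝ)/2+1 := by ring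
    rw [h2] at hkey
    rw [hGm, hGn, hSπ]
    exact hkey
  -- the target rpow equals r ^ m
  have hrpow : (1 - d ^ 2) ^ ((((m+1) : ℝ) - 1) / 2) = r ^ m := by
    rw [hr, Real.sqrt_eq_rpow, ← Real.rpow_natCast ((1-d^2) ^ ((1:ℝ)/2)) m,
      ← Real.rpow_mul hx.le]
    congr 1
    push_cast
    ring
  rw [hrpow]
  have hGm0 : Gm ≠ 0 := ne_of_gt hGmpos
  have hGn0 : Gn ≠ 0 := ne_of_gt hGnpos
  rw [ge_iff_le, le_div_iff₀ (by positivity : (0:ℝ) < Sπ ^ (m+1) / Gn)]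
  refine le_trans ?_ htoReal
  have hmul := mul_le_mul_of_nonneg_left hkeyn
    (show (0:ℝ) ≤ d * r^m * Sπ^m / (3 * Gn * Gm) by positivity)
  calc d / 3 * r ^ m * Real.sqrt ((m:ℝ)+1) * (Sπ ^ (m+1) / Gn)
      = d * r^m * Sπ^m / (3 * Gn * Gm) * (Sπ * Real.sqrt ((m:ℝ)+1) * Gm) := by
        rw [pow_succ]
        field_simp
    _ ≤ d * r^m * Sπ^m / (3 * Gn * Gm) * (3 * Gn) := hmul
    _ = d * (r ^ m * (Sπ ^ m / Gm)) := by field_simp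

lemma partA_one (m : ℕ) (c₁ c₂ : EuclideanSpace ℝ (Fin (m+1))) (d : ℝ)
    (hd0 : 0 ≤ d) (hd1 : d ≤ 1) (hdist : dist c₁ c₂ = d) :
    (volume (Metric.ball c₁ 1 ∩ Metric.ball c₂ 1)).toReal
        / (volume (Metric.ball c₁ 1)).toReal ≥ (1/2 : ℝ)^(m+1) := by
  set mid := midpoint ℝ c₁ c₂ with hmiddef
  have h1 : dist mid c₁ = d/2 := by
    rw [hmiddef, dist_midpoint_left, hdist, Real.norm_ofNat]
    ring
  have h2 : dist mid c₂ = d/2 := by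
    rw [hmiddef, dist_midpoint_right, hdist, Real.norm_ofNat]
    ring
  have hmid : Metric.ball mid (1/2 : ℝ) ⊆ Metric.ball c₁ 1 ∩ Metric.ball c₂ 1 := by
    intro x hx
    rw [Metric.mem_ball] at hx
    constructor
    · rw [Metric.mem_ball]
      calc dist x c₁ ≤ dist x mid + dist mid c₁ := dist_triangle _ _ _
        _ < 1/2 + d/2 := by rw [h1]; linarith
        _ ≤ 1 := by linarith
    · rw [Metric.mem_ball]
      calc dist x c₂ ≤ dist x mid + dist mid c₂ := dist_triangle _ _ _
        _ < 1/2 + d/2 := by rw [h2]; linarith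
        _ ≤ 1 := by linarith
  have hGpos : (0:ℝ) < Real.Gamma (((m+1:ℕ):ℝ)/2+1) := Real.Gamma_pos_of_pos (by positivity)
  have hcpos : (0:ℝ) < Real.sqrt π ^ (m+1) / Real.Gamma (((m+1:ℕ):ℝ)/2+1) := by
    have := Real.pi_pos
    positivity
  have hVball : volume (Metric.ball c₁ (1:ℝ))
      = ENNReal.ofReal (Real.sqrt π ^ (m+1) / Real.Gamma (((m+1:ℕ):ℝ)/2+1)) := by
    rw [EuclideanSpace.volume_ball]
    simp [Fintype.card_fin]
  have hVmid : volume (Metric.ball mid (1/2:ℝ))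
      = ENNReal.ofReal (1/2) ^ (m+1)
        * ENNReal.ofReal (Real.sqrt π ^ (m+1) / Real.Gamma (((m+1:ℕ):ℝ)/2+1)) := by
    rw [EuclideanSpace.volume_ball]
    simp [Fintype.card_fin]
  have hfin : volume (Metric.ball c₁ 1 ∩ Metric.ball c₂ 1) ≠ ⊤ := by
    apply ne_of_lt
    calc volume (Metric.ball c₁ 1 ∩ Metric.ball c₂ 1) ≤ volume (Metric.ball c₁ (1:ℝ)) :=
          measure_mono Set.inter_subset_left
      _ < ⊤ := by rw [hVball]; exact ENNReal.ofReal_lt_top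
  have hle := ENNReal.toReal_mono hfin (measure_mono hmid)
  rw [hVmid, ENNReal.toReal_mul, ENNReal.toReal_pow,
    ENNReal.toReal_ofReal (by norm_num : (0:ℝ) ≤ 1/2),
    ENNReal.toReal_ofReal hcpos.le] at hle
  rw [hVball, ENNReal.toReal_ofReal hcpos.le, ge_iff_le,
    le_div_iff₀ hcpos]
  linarith

/-- The volume of the intersection of two unit balls whose centers are at distance
`d ≤ 1`, divided by the volume of one ball, is at least `(d/3)(1−d²)^{(n−1)/2}√n`,
and in particular at least `(d/3)(1−d²)^{n/2}`. -/
theorem inter_balls_volume_ge (n : ℕ) (hn : 1 ≤ n)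
    (c₁ c₂ : EuclideanSpace ℝ (Fin n)) (d : ℝ) (hd0 : 0 ≤ d) (hd1 : d ≤ 1)
    (hdist : dist c₁ c₂ = d) :
    (volume (Metric.ball c₁ 1 ∩ Metric.ball c₂ 1)).toReal
        / (volume (Metric.ball c₁ 1)).toReal
      ≥ d / 3 * (1 - d ^ 2) ^ (((n : ℝ) - 1) / 2) * Real.sqrt n
    ∧ d / 3 * (1 - d ^ 2) ^ (((n : ℝ) - 1) / 2) * Real.sqrt n
      ≥ d / 3 * (1 - d ^ 2) ^ ((n : ℝ) / 2) := by
  refine ⟨?_, partB n hn d hd0 hd1⟩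
  obtain ⟨m, rfl⟩ : ∃ m, n = m + 1 := ⟨n - 1, by omega⟩
  rcases Nat.eq_zero_or_pos m with hm | hm
  · -- n = 1 : use the midpoint ball
    subst hm
    have h := partA_one 0 c₁ c₂ d hd0 hd1 hdist
    have hsimp : d / 3 * (1 - d ^ 2) ^ ((((0+1:ℕ) : ℝ) - 1) / 2) * Real.sqrt ((0+1:ℕ)) = d/3 := by
      norm_num
    rw [hsimp]
    have : (1/2 : ℝ)^(0+1) = 1/2 := by norm_num
    rw [this] at h
    linarith
  · -- n ≥ 2
    rcases eq_or_lt_of_le hd0 with h0 | h0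
    · -- d = 0
      have hz : d / 3 * (1 - d ^ 2) ^ ((((m+1:ℕ) : ℝ) - 1) / 2) * Real.sqrt ((m+1:ℕ)) = 0 := by
        rw [← h0]
        ring
      rw [hz]
      exact div_nonneg ENNReal.toReal_nonneg ENNReal.toReal_nonneg
    rcases eq_or_lt_of_le hd1 with h1 | h1
    · -- d = 1
      subst h1
      have hz : (1:ℝ) - 1^2 = 0 := by ring
      have hexp : (0:ℝ) < (((m+1:ℕ) : ℝ) - 1) / 2 := by
        have : (1:ℝ) ≤ (m:ℝ) := by exact_mod_cast hm
        push_cast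
        linarith
      rw [hz, Real.zero_rpow (ne_of_gt hexp)]
      have : (1:ℝ) / 3 * 0 * Real.sqrt ((m+1:ℕ)) = 0 := by ring
      rw [this]
      exact div_nonneg ENNReal.toReal_nonneg ENNReal.toReal_nonneg
    · -- 0 < d < 1
      have h := partA_main m hm c₁ c₂ d h0 h1 hdist
      have hcast : ((m+1:ℕ):ℝ) = (m:ℝ) + 1 := by push_cast; ring
      calc d / 3 * (1 - d ^ 2) ^ ((((m+1:ℕ) : ℝ) - 1) / 2) * Real.sqrt ((m+1:ℕ))
          = d / 3 * (1 - d ^ 2) ^ ((((m:ℝ)+1) - 1) / 2) * Real.sqrt ((m:ℝ)+1) := by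
            rw [hcast]
        _ ≤ _ := h
end

section
/- Let q ≥ 1, σ > 0, and λ ∈ ℤ. If X is distributed according to the discrete Gaussian D_{ℤ,σ}, then the bias of λX modulo q, namely E[exp(2iπλX/q)], equals ρ_{1/σ}(ℤ + λ/q)/ρ_{1/σ}(ℤ) ≥ exp(−πλ²σ²/q²); in particular it is real and positive. -/
open scoped Real

open Real


lemma summable_gauss_shift {b : ℝ} (hb : 0 < b) (c : ℝ) :
    Summable fun y : ℤ => Real.exp (-π * b * ((y : ℝ) + c) ^ 2) := by
  have h := HurwitzKernelBounds.summable_f_int 0 c hb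
  convert h using 2 with y
  simp only [HurwitzKernelBounds.f_int, pow_zero, one_mul]
  ring_nf

lemma summable_gauss_lin {b : ℝ} (hb : 0 < b) (c : ℝ) :
    Summable fun y : ℤ => Real.exp (-π * b * (y : ℝ) ^ 2 + (-2 * π * b * c) * y) := by
  have h := (summable_gauss_shift hb c).mul_right (Real.exp (π * b * c ^ 2))
  convert h using 2 with y
  · rfl
  rw [← Real.exp_add]
  ring_nf

lemma gauss_shift_lower {b : ℝ} (hb : 0 < b) (c : ℝ) :
    Real.exp (-π * b * c ^ 2) * ∑' y : ℤ, Real.exp (-π * b * (y : ℝ) ^ 2)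
      ≤ ∑' y : ℤ, Real.exp (-π * b * ((y : ℝ) + c) ^ 2) := by
  set s : ℝ := -2 * π * b * c with hs
  have h1 : Summable fun y : ℤ => Real.exp (-π * b * (y : ℝ) ^ 2 + s * y) :=
    summable_gauss_lin hb c
  have h2 : Summable fun y : ℤ => Real.exp (-π * b * (y : ℝ) ^ 2 + -s * y) := by
    have := summable_gauss_lin hb (-c)
    convert this using 3 with y
    ring
  have h0 : Summable fun y : ℤ => Real.exp (-π * b * (y : ℝ) ^ 2) := by
    simpa using summable_gauss_shift hb 0
  have hcosh : Summable fun y : ℤ =>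
      Real.exp (-π * b * (y : ℝ) ^ 2) * Real.cosh (s * y) := by
    have := (h1.add h2).div_const 2
    convert this using 2 with y
    · rfl
    rw [Real.cosh_eq, Real.exp_add, Real.exp_add]
    ring_nf
  -- symmetry: sum with -s equals sum with s
  have hsym : (∑' y : ℤ, Real.exp (-π * b * (y : ℝ) ^ 2 + -s * y))
      = ∑' y : ℤ, Real.exp (-π * b * (y : ℝ) ^ 2 + s * y) := by
    have := (Equiv.neg ℤ).tsum_eq (fun y : ℤ => Real.exp (-π * b * (y : ℝ) ^ 2 + s * y))
    rw [← this]
    apply tsum_congr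
    intro y
    simp only [Equiv.neg_apply, Int.cast_neg]
    ring_nf
  have hkey : (∑' y : ℤ, Real.exp (-π * b * (y : ℝ) ^ 2 + s * y))
      = ∑' y : ℤ, Real.exp (-π * b * (y : ℝ) ^ 2) * Real.cosh (s * y) := by
    have := Summable.tsum_add h1 h2
    rw [hsym] at this
    have h3 : (∑' y : ℤ, Real.exp (-π * b * (y : ℝ) ^ 2) * Real.cosh (s * y))
        = (∑' y : ℤ, (Real.exp (-π * b * (y : ℝ) ^ 2 + s * y)
            + Real.exp (-π * b * (y : ℝ) ^ 2 + -s * y))) / 2 := by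
      rw [← tsum_div_const]
      apply tsum_congr
      intro y
      rw [Real.cosh_eq, Real.exp_add, Real.exp_add]
      ring_nf
    rw [h3, this]
    ring
  have hle : (∑' y : ℤ, Real.exp (-π * b * (y : ℝ) ^ 2))
      ≤ ∑' y : ℤ, Real.exp (-π * b * (y : ℝ) ^ 2) * Real.cosh (s * y) := by
    refine Summable.tsum_le_tsum (fun y => ?_) h0 hcosh
    nth_rewrite 1 [← mul_one (Real.exp (-π * b * (y : ℝ) ^ 2))]
    exact mul_le_mul_of_nonneg_left (Real.one_le_cosh _) (Real.exp_pos _).le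
  have hshift : (∑' y : ℤ, Real.exp (-π * b * ((y : ℝ) + c) ^ 2))
      = Real.exp (-π * b * c ^ 2) * ∑' y : ℤ, Real.exp (-π * b * (y : ℝ) ^ 2 + s * y) := by
    rw [← tsum_mul_left]
    apply tsum_congr
    intro y
    rw [← Real.exp_add]
    congr 1
    simp only [hs]
    ring
  rw [hshift]
  refine mul_le_mul_of_nonneg_left ?_ (Real.exp_pos _).le
  rw [hkey]
  exact hle


lemma poisson_bias (σ : ℝ) (hσ : 0 < σ) (c : ℝ) :
    (∑' x : ℤ, ((Real.exp (-π * (x : ℝ) ^ 2 / σ ^ 2) : ℝ) : ℂ)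
        * Complex.exp (2 * π * Complex.I * (c : ℂ) * (x : ℂ)))
      = (σ : ℂ) * ∑' y : ℤ, ((Real.exp (-π * σ ^ 2 * ((y : ℝ) + c) ^ 2) : ℝ) : ℂ) := by
  set a : ℂ := ((1 / σ ^ 2 : ℝ) : ℂ) with ha_def
  have ha : 0 < a.re := by
    simp only [ha_def, Complex.ofReal_re]
    positivity
  have key := Complex.tsum_exp_neg_quadratic ha (Complex.I * (c : ℂ))
  have hL : (∑' x : ℤ, ((Real.exp (-π * (x : ℝ) ^ 2 / σ ^ 2) : ℝ) : ℂ)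
        * Complex.exp (2 * π * Complex.I * (c : ℂ) * (x : ℂ)))
      = ∑' n : ℤ, Complex.exp (-π * a * (n : ℂ) ^ 2 + 2 * π * (Complex.I * (c : ℂ)) * (n : ℂ)) := by
    apply tsum_congr
    intro x
    rw [Complex.exp_add, Complex.ofReal_exp]
    congr 1
    · congr 1
      push_cast [ha_def]
      have : (σ : ℂ) ≠ 0 := by exact_mod_cast hσ.ne'
      field_simp
    · ring_nf
  have hsqrt : (1 : ℂ) / a ^ (1 / 2 : ℂ) = (σ : ℂ) := by
    have h1 : ((1 / σ ^ 2 : ℝ) ^ (1 / 2 : ℝ) : ℝ) = 1 / σ := by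
      rw [← Real.sqrt_eq_rpow, one_div, Real.sqrt_inv, Real.sqrt_sq hσ.le, one_div]
    have h2 : a ^ (1 / 2 : ℂ) = ((1 / σ : ℝ) : ℂ) := by
      rw [ha_def, show ((1:ℂ)/2) = (((1/2 : ℝ) : ℝ) : ℂ) by norm_num,
        ← Complex.ofReal_cpow (by positivity), h1]
    rw [h2]
    have : (σ : ℂ) ≠ 0 := by exact_mod_cast hσ.ne'
    push_cast
    field_simp
  have hR : (∑' n : ℤ, Complex.exp (-π / a * ((n : ℂ) + Complex.I * (Complex.I * (c : ℂ))) ^ 2))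
      = ∑' y : ℤ, ((Real.exp (-π * σ ^ 2 * ((y : ℝ) + c) ^ 2) : ℝ) : ℂ) := by
    have hre : ∀ n : ℤ, Complex.exp (-π / a * ((n : ℂ) + Complex.I * (Complex.I * (c : ℂ))) ^ 2)
        = ((Real.exp (-π * σ ^ 2 * ((n : ℝ) - c) ^ 2) : ℝ) : ℂ) := by
      intro n
      rw [Complex.ofReal_exp]
      congr 1
      have hI : (n : ℂ) + Complex.I * (Complex.I * (c : ℂ)) = ((n - c : ℝ) : ℂ) := by
        rw [← mul_assoc, Complex.I_mul_I]
        push_cast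
        ring
      rw [hI]
      have hdiv : -(π : ℂ) / a = ((-π * σ ^ 2 : ℝ) : ℂ) := by
        rw [ha_def]
        push_cast
        have : (σ : ℂ) ≠ 0 := by exact_mod_cast hσ.ne'
        field_simp
      rw [hdiv]
      push_cast
      ring
    rw [tsum_congr hre]
    rw [← (Equiv.neg ℤ).tsum_eq (fun y : ℤ => ((Real.exp (-π * σ ^ 2 * ((y : ℝ) - c) ^ 2) : ℝ) : ℂ))]
    apply tsum_congr
    intro y
    simp only [Equiv.neg_apply, Int.cast_neg]
    norm_num
    ring_nf
  rw [hL, key, hsqrt, hR]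



/-- For `X ∼ D_{ℤ,σ}` and `l ∈ ℤ`, the bias of `l·X` modulo `q` equals
`ρ_{1/σ}(ℤ + l/q)/ρ_{1/σ}(ℤ)` and is at least `exp(−π l² σ²/q²)`. -/
theorem bias_discrete_gaussian (q : ℕ) (hq : 1 ≤ q) (σ : ℝ) (hσ : 0 < σ) (l : ℤ) :
    (∑' x : ℤ,
        ((Real.exp (-π * (x : ℝ) ^ 2 / σ ^ 2)
            / ∑' k : ℤ, Real.exp (-π * (k : ℝ) ^ 2 / σ ^ 2) : ℝ) : ℂ)
          * Complex.exp (2 * π * Complex.I * (l : ℂ) * (x : ℂ) / (q : ℂ)))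
      = (((∑' y : ℤ, Real.exp (-π * σ ^ 2 * ((y : ℝ) + (l : ℝ) / q) ^ 2))
          / ∑' y : ℤ, Real.exp (-π * σ ^ 2 * (y : ℝ) ^ 2) : ℝ) : ℂ)
    ∧ Real.exp (-π * (l : ℝ) ^ 2 * σ ^ 2 / q ^ 2)
        ≤ (∑' y : ℤ, Real.exp (-π * σ ^ 2 * ((y : ℝ) + (l : ℝ) / q) ^ 2))
          / ∑' y : ℤ, Real.exp (-π * σ ^ 2 * (y : ℝ) ^ 2) := by
  have hq0 : (0 : ℝ) < q := by exact_mod_cast hq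
  have hqC : (q : ℂ) ≠ 0 := by exact_mod_cast hq0.ne'
  set c : ℝ := (l : ℝ) / q with hc
  set D' : ℝ := ∑' y : ℤ, Real.exp (-π * σ ^ 2 * (y : ℝ) ^ 2) with hD'def
  set N : ℝ := ∑' y : ℤ, Real.exp (-π * σ ^ 2 * ((y : ℝ) + c) ^ 2) with hNdef
  have hb : (0 : ℝ) < σ ^ 2 := by positivity
  have hsumD' : Summable fun y : ℤ => Real.exp (-π * σ ^ 2 * (y : ℝ) ^ 2) := by
    simpa using summable_gauss_shift hb 0
  have hD'pos : 0 < D' := by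
    rw [hD'def]
    exact Summable.tsum_pos hsumD' (fun y => (Real.exp_pos _).le) 0 (Real.exp_pos _)
  -- Denominator via Poisson summation
  have hD : (∑' k : ℤ, Real.exp (-π * (k : ℝ) ^ 2 / σ ^ 2)) = σ * D' := by
    have h := Real.tsum_exp_neg_mul_int_sq (a := 1 / σ ^ 2) (by positivity)
    have h1 : ((1 / σ ^ 2 : ℝ) ^ (1 / 2 : ℝ) : ℝ) = 1 / σ := by
      rw [← Real.sqrt_eq_rpow, one_div, Real.sqrt_inv, Real.sqrt_sq hσ.le, one_div]
    rw [h1] at h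
    have h2 : (∑' k : ℤ, Real.exp (-π * (k : ℝ) ^ 2 / σ ^ 2))
        = ∑' n : ℤ, Real.exp (-π * (1 / σ ^ 2) * (n : ℝ) ^ 2) := by
      apply tsum_congr; intro n; congr 1; field_simp
    have h3 : (∑' n : ℤ, Real.exp (-π / (1 / σ ^ 2) * (n : ℝ) ^ 2)) = D' := by
      rw [hD'def]; apply tsum_congr; intro n; congr 1; field_simp
    rw [h2, h, h3]
    field_simp
  have hDpos : 0 < σ * D' := mul_pos hσ hD'pos
  constructor
  · -- Equality via Poisson summation
    have hP := poisson_bias σ hσ c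
    have hterm : ∀ x : ℤ,
        ((Real.exp (-π * (x : ℝ) ^ 2 / σ ^ 2)
            / ∑' k : ℤ, Real.exp (-π * (k : ℝ) ^ 2 / σ ^ 2) : ℝ) : ℂ)
          * Complex.exp (2 * π * Complex.I * (l : ℂ) * (x : ℂ) / (q : ℂ))
        = ((Real.exp (-π * (x : ℝ) ^ 2 / σ ^ 2) : ℝ) : ℂ)
            * Complex.exp (2 * π * Complex.I * (c : ℂ) * (x : ℂ)) * ((σ * D' : ℝ) : ℂ)⁻¹ := by
      intro x
      rw [hD]
      have hphase : 2 * (π : ℂ) * Complex.I * (l : ℂ) * (x : ℂ) / (q : ℂ)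
          = 2 * π * Complex.I * (c : ℂ) * (x : ℂ) := by
        rw [hc]; push_cast; field_simp
      rw [hphase, Complex.ofReal_div, div_eq_mul_inv]
      ring
    rw [tsum_congr hterm, tsum_mul_right, hP, ← Complex.ofReal_tsum, ← hNdef]
    have hD'C : ((D' : ℝ) : ℂ) ≠ 0 := by exact_mod_cast hD'pos.ne'
    have hσC : ((σ : ℝ) : ℂ) ≠ 0 := by exact_mod_cast hσ.ne'
    push_cast
    field_simp
  · -- Inequality
    have hlow := gauss_shift_lower hb c
    rw [← hD'def, ← hNdef] at hlow
    have harg : -π * (l : ℝ) ^ 2 * σ ^ 2 / q ^ 2 = -π * σ ^ 2 * c ^ 2 := by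
      rw [hc]; field_simp
    rw [harg, le_div_iff₀ hD'pos]
    linarith [hlow]
end

section
/- Let s ∈ (ℤ/qℤ)^n, e ∈ (ℤ/qℤ)^m, and let x ∈ ℤ^m, y ∈ ℤ^n have coordinates drawn i.i.d. from D_{ℤ,σ}. Then the bias of ⟨s,y⟩ + ⟨e,x⟩ modulo q is at least exp(−π(‖s‖² + ‖e‖²)σ²/q²). -/
open scoped Real
open Real

set_option maxHeartbeats 1000000

lemma summable_rexp_quad {a : ℝ} (ha : 0 < a) (c : ℝ) :
    Summable fun n : ℤ => rexp (-π * a * n ^ 2 + c * n) := by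
  refine Summable.of_nonneg_of_le (fun n => (exp_pos _).le) (fun n => ?_)
    ((summable_pow_mul_jacobiTheta₂_term_bound (|c| / (2 * π)) ha 0).congr (fun n => by
      rw [pow_zero, one_mul]))
  rw [Real.exp_le_exp]
  have h1 : c * n ≤ |c| * ((|n| : ℤ) : ℝ) := by
    rw [Int.cast_abs, ← abs_mul]; exact le_abs_self _
  have hπ : (π:ℝ) ≠ 0 := pi_pos.ne'
  have h3 : -π * (a * (n:ℝ) ^ 2 - 2 * (|c| / (2 * π)) * ((|n|:ℤ):ℝ))
      = -π * a * n ^ 2 + |c| * ((|n|:ℤ):ℝ) := by field_simp; ring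
  rw [h3]
  linarith

lemma poisson_cos {σ : ℝ} (hσ : 0 < σ) (t : ℝ) :
    ∑' k : ℤ, rexp (-π * (1/σ^2) * k ^ 2) * Real.cos (2 * π * t * k)
      = σ * ∑' k : ℤ, rexp (-π * σ^2 * ((k:ℝ) - t) ^ 2) := by
  have hσ2 : (0:ℝ) < 1/σ^2 := by positivity
  have key := Complex.tsum_exp_neg_quadratic (a := ((1/σ^2 : ℝ) : ℂ))
      (by rw [Complex.ofReal_re]; exact hσ2) (Complex.I * t)
  have harg : ∀ n : ℤ, (-↑π * ((1/σ^2:ℝ):ℂ) * (n:ℂ)^2 + 2*↑π*(Complex.I*↑t)*(n:ℂ))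
      = Complex.ofReal (-π * (1/σ^2) * (n:ℝ)^2) + Complex.ofReal (2*π*t*(n:ℝ)) * Complex.I := by
    intro n; push_cast; ring
  have hre2 : ∀ x y : ℝ, (Complex.ofReal x + Complex.ofReal y * Complex.I).re = x := by
    intro x y; simp
  have him2 : ∀ x y : ℝ, (Complex.ofReal x + Complex.ofReal y * Complex.I).im = y := by
    intro x y; simp
  have hsum : Summable fun n : ℤ =>
      Complex.exp (-↑π * ((1/σ^2:ℝ):ℂ) * (n:ℂ)^2 + 2*↑π*(Complex.I*↑t)*(n:ℂ)) := by
    apply Summable.of_norm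
    refine ((summable_rexp_quad hσ2 0).congr (fun n => ?_))
    rw [harg n, Complex.norm_exp, hre2]
    norm_num
  have hre : ∀ n : ℤ,
      (Complex.exp (-↑π * ((1/σ^2:ℝ):ℂ) * (n:ℂ)^2 + 2*↑π*(Complex.I*↑t)*(n:ℂ))).re
      = rexp (-π * (1/σ^2) * n ^ 2) * Real.cos (2 * π * t * n) := by
    intro n
    rw [harg n, Complex.exp_re, hre2, him2]
  have hσC : (σ:ℂ) ≠ 0 := Complex.ofReal_ne_zero.mpr hσ.ne'
  have h1 : ∀ n : ℤ, (-↑π / ((1/σ^2:ℝ):ℂ) * ((n:ℂ) + Complex.I*(Complex.I*↑t))^2)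
      = Complex.ofReal (-π*σ^2*((n:ℝ)-t)^2) := by
    intro n
    have hII : Complex.I * (Complex.I * (t:ℂ)) = -↑t := by
      rw [← mul_assoc, Complex.I_mul_I]; ring
    have e1 : (-(π:ℂ) / ((1/σ^2:ℝ):ℂ)) = Complex.ofReal (-π*σ^2) := by
      push_cast; field_simp
    rw [hII, e1]
    push_cast; ring
  have h2 : (1/((1/σ^2:ℝ):ℂ) ^ (1/2:ℂ)) = (σ:ℂ) := by
    rw [show (1/2:ℂ) = ((1/2:ℝ):ℂ) by norm_num, ← Complex.ofReal_cpow (by positivity)]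
    have : (1/σ^2 : ℝ) ^ (1/2:ℝ) = 1/σ := by
      rw [← Real.sqrt_eq_rpow, one_div, Real.sqrt_inv, Real.sqrt_sq hσ.le, one_div]
    rw [this]
    push_cast
    field_simp
  rw [h2] at key
  simp_rw [h1, ← Complex.ofReal_exp] at key
  rw [← Complex.ofReal_tsum, ← Complex.ofReal_mul] at key
  have h3 := congrArg Complex.re key
  rw [Complex.re_tsum hsum, Complex.ofReal_re] at h3
  exact (tsum_congr hre).symm.trans h3

lemma summable_shift {σ : ℝ} (hσ : 0 < σ) (t : ℝ) :
    Summable fun k : ℤ => rexp (-π * σ^2 * ((k:ℝ) - t) ^ 2) := by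
  have h := (summable_rexp_quad (show (0:ℝ) < σ^2 by positivity) (2*π*σ^2*t)).mul_right
    (rexp (-π * σ^2 * t^2))
  refine h.congr (fun k => ?_)
  rw [← Real.exp_add]
  congr 1
  ring

lemma shift_ge {σ : ℝ} (hσ : 0 < σ) (t : ℝ) :
    rexp (-π * σ^2 * t^2) * ∑' k : ℤ, rexp (-π * σ^2 * (k:ℝ)^2)
      ≤ ∑' k : ℤ, rexp (-π * σ^2 * ((k:ℝ) - t)^2) := by
  set G : ℤ → ℝ := fun k => rexp (-π * σ^2 * ((k:ℝ) - t)^2) with hG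
  have hs : Summable G := summable_shift hσ t
  have hsneg : Summable fun k : ℤ => G (-k) := ((Equiv.neg ℤ).summable_iff).mpr hs
  have hs0 : Summable fun k : ℤ => rexp (-π * σ^2 * (k:ℝ)^2) := by
    refine (summable_rexp_quad (show (0:ℝ) < σ^2 by positivity) 0).congr (fun k => ?_)
    norm_num
  have hexp2 : ∀ x : ℝ, rexp x = rexp (x/2)^2 := by
    intro x; rw [pow_two, ← Real.exp_add]; congr 1; ring
  have key : ∀ k:ℤ, rexp (-π*σ^2*t^2) * rexp (-π*σ^2*(k:ℝ)^2) ≤ (G k + G (-k))/2 := by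
    intro k
    have h1 : rexp (-π*σ^2*t^2) * rexp (-π*σ^2*(k:ℝ)^2)
        = rexp ((-π*σ^2*((k:ℝ)-t)^2)/2) * rexp (-π*σ^2*(((-k:ℤ):ℝ)-t)^2/2) := by
      rw [← Real.exp_add, ← Real.exp_add]
      congr 1
      push_cast
      ring
    have h2 : G k = rexp ((-π*σ^2*((k:ℝ)-t)^2)/2)^2 := hexp2 _
    have h3 : G (-k) = rexp (-π*σ^2*(((-k:ℤ):ℝ)-t)^2/2)^2 := hexp2 _
    rw [h1, h2, h3]
    nlinarith [sq_nonneg (rexp ((-π*σ^2*((k:ℝ)-t)^2)/2) - rexp (-π*σ^2*(((-k:ℤ):ℝ)-t)^2/2))]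
  calc rexp (-π * σ^2 * t^2) * ∑' k : ℤ, rexp (-π * σ^2 * (k:ℝ)^2)
      = ∑' k : ℤ, rexp (-π*σ^2*t^2) * rexp (-π*σ^2*(k:ℝ)^2) := tsum_mul_left.symm
    _ ≤ ∑' k : ℤ, (G k + G (-k))/2 :=
        Summable.tsum_le_tsum key (hs0.mul_left _) ((hs.add hsneg).div_const 2)
    _ = ((∑' k, G k) + ∑' k : ℤ, G (-k))/2 := by
        rw [tsum_div_const, Summable.tsum_add hs hsneg]
    _ = ∑' k, G k := by
        have := (Equiv.neg ℤ).tsum_eq G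
        simp only [Equiv.neg_apply] at this
        rw [this]; ring

lemma denom_eq {σ : ℝ} (hσ : 0 < σ) :
    ∑' k : ℤ, rexp (-π * (1/σ^2) * (k:ℝ)^2) = σ * ∑' k : ℤ, rexp (-π * σ^2 * (k:ℝ)^2) := by
  have h := Real.tsum_exp_neg_mul_int_sq (show (0:ℝ) < 1/σ^2 by positivity)
  have h1 : (1:ℝ)/(1/σ^2)^(1/2:ℝ) = σ := by
    have hsq : √(1/σ^2) = 1/σ := by
      rw [one_div, Real.sqrt_inv, Real.sqrt_sq hσ.le, one_div]
    rw [← Real.sqrt_eq_rpow, hsq, one_div_one_div]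
  have h2 : ∀ k : ℤ, -π / (1/σ^2) * (k:ℝ)^2 = -π * σ^2 * (k:ℝ)^2 := by
    intro k; field_simp
  rw [h1] at h
  simp_rw [h2] at h
  exact h

lemma coord_bound {σ : ℝ} (hσ : 0 < σ) (t : ℝ) :
    rexp (-π * t^2 * σ^2) * ∑' k : ℤ, rexp (-π * (k:ℝ)^2 / σ^2)
      ≤ ∑' k : ℤ, rexp (-π * (k:ℝ)^2 / σ^2) * Real.cos (2 * π * t * k) := by
  have e1 : ∀ k:ℤ, -π * (k:ℝ)^2 / σ^2 = -π * (1/σ^2) * (k:ℝ)^2 := fun k => by ring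
  simp_rw [e1]
  rw [poisson_cos hσ t, denom_eq hσ]
  have := mul_le_mul_of_nonneg_left (shift_ge hσ t) hσ.le
  calc rexp (-π * t^2 * σ^2) * (σ * ∑' k : ℤ, rexp (-π * σ^2 * (k:ℝ)^2))
      = σ * (rexp (-π * σ^2 * t^2) * ∑' k : ℤ, rexp (-π * σ^2 * (k:ℝ)^2)) := by
        rw [show -π * t^2 * σ^2 = -π * σ^2 * t^2 by ring]; ring
    _ ≤ σ * ∑' k : ℤ, rexp (-π * σ^2 * ((k:ℝ) - t)^2) := this

lemma tsum_prod_pi {n : ℕ} (g : Fin n → ℤ → ℂ) (hg : ∀ i, Summable fun k => ‖g i k‖) :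
    Summable (fun x : Fin n → ℤ => ‖∏ i, g i (x i)‖) ∧
      (∑' x : Fin n → ℤ, ∏ i, g i (x i)) = ∏ i, ∑' k, g i k := by
  induction n with
  | zero =>
    constructor
    · exact .of_finite
    · simp only [Finset.univ_eq_empty, Finset.prod_empty]
      exact tsum_eq_single (fun i => i.elim0) (fun b hb => absurd (funext fun i => i.elim0) hb)
  | succ n ih =>
    set g' : Fin n → ℤ → ℂ := fun i => g i.succ with hg'def
    obtain ⟨ihS, ihE⟩ := ih g' (fun i => hg i.succ)
    set E : (Fin (n+1) → ℤ) ≃ ℤ × (Fin n → ℤ) :=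
      { toFun := fun x => (x 0, fun i => x i.succ)
        invFun := fun p => Fin.cons p.1 p.2
        left_inv := fun x => Fin.cons_self_tail x
        right_inv := fun p => by
          ext i
          · simp
          · simp } with hE
    set F : ℤ × (Fin n → ℤ) → ℂ := fun p => g 0 p.1 * ∏ i, g' i (p.2 i) with hF
    have hprod : ∀ x : Fin (n+1) → ℤ, (∏ i, g i (x i)) = F (E x) := by
      intro x
      exact Fin.prod_univ_succ _
    have hFS : Summable fun p : ℤ × (Fin n → ℤ) => ‖F p‖ := by
      refine ((hg 0).mul_of_nonneg ihS (fun k => norm_nonneg _)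
        (fun y => norm_nonneg _)).congr (fun p => ?_)
      simp [hF, norm_mul]
    constructor
    · refine (E.summable_iff.mpr hFS).congr (fun x => ?_)
      simp only [Function.comp]
      rw [hprod x]
    · calc (∑' x : Fin (n+1) → ℤ, ∏ i, g i (x i))
          = ∑' x : Fin (n+1) → ℤ, F (E x) := tsum_congr hprod
        _ = ∑' p : ℤ × (Fin n → ℤ), F p := E.tsum_eq F
        _ = (∑' k, g 0 k) * ∑' y : Fin n → ℤ, ∏ i, g' i (y i) :=
            (tsum_mul_tsum_of_summable_norm (hg 0) ihS).symm
        _ = ∏ i, ∑' k, g i k := by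
            rw [ihE, Fin.prod_univ_succ]

lemma summable_w {σ : ℝ} (hσ : 0 < σ) :
    Summable fun k : ℤ => rexp (-π * (k:ℝ)^2 / σ^2) := by
  refine (summable_rexp_quad (show (0:ℝ) < 1/σ^2 by positivity) 0).congr (fun k => ?_)
  congr 1
  ring

lemma Sg_pos {σ : ℝ} (hσ : 0 < σ) : 0 < ∑' k : ℤ, rexp (-π * (k:ℝ)^2 / σ^2) :=
  Summable.tsum_pos (summable_w hσ) (fun k => (exp_pos _).le) 0 (exp_pos _)

lemma summable_wcos {σ : ℝ} (hσ : 0 < σ) (t c : ℝ) :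
    Summable fun k : ℤ => rexp (-π * (k:ℝ)^2 / σ^2) / c * Real.cos (2*π*t*k) := by
  refine Summable.of_norm_bounded ((summable_w hσ).div_const c).abs (fun k => ?_)
  rw [Real.norm_eq_abs, abs_mul]
  calc |rexp (-π * (k:ℝ)^2 / σ^2) / c| * |Real.cos (2*π*t*k)|
      ≤ |rexp (-π * (k:ℝ)^2 / σ^2) / c| * 1 := by
        gcongr
        exact abs_cos_le_one _
    _ = |rexp (-π * (k:ℝ)^2 / σ^2) / c| := mul_one _

lemma summable_wsin {σ : ℝ} (hσ : 0 < σ) (t c : ℝ) :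
    Summable fun k : ℤ => rexp (-π * (k:ℝ)^2 / σ^2) / c * Real.sin (2*π*t*k) := by
  refine Summable.of_norm_bounded ((summable_w hσ).div_const c).abs (fun k => ?_)
  rw [Real.norm_eq_abs, abs_mul]
  calc |rexp (-π * (k:ℝ)^2 / σ^2) / c| * |Real.sin (2*π*t*k)|
      ≤ |rexp (-π * (k:ℝ)^2 / σ^2) / c| * 1 := by
        gcongr
        exact abs_sin_le_one _
    _ = |rexp (-π * (k:ℝ)^2 / σ^2) / c| := mul_one _

lemma coord_bound' {σ : ℝ} (hσ : 0 < σ) (t : ℝ) :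
    rexp (-π * t^2 * σ^2)
      ≤ ∑' k : ℤ, rexp (-π * (k:ℝ)^2 / σ^2) / (∑' j : ℤ, rexp (-π * (j:ℝ)^2 / σ^2))
          * Real.cos (2*π*t*k) := by
  have hS := Sg_pos hσ
  simp_rw [div_mul_eq_mul_div]
  rw [tsum_div_const, le_div_iff₀ hS]
  exact coord_bound hσ t

lemma fC_norm {σ : ℝ} (hσ : 0 < σ) (c : ℝ) (hc : 0 < c) (θ : ℝ) (k : ℤ) :
    ‖Complex.ofReal (rexp (-π * (k:ℝ)^2 / σ^2) / c)
        * Complex.exp (Complex.ofReal θ * Complex.I)‖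
      = rexp (-π * (k:ℝ)^2 / σ^2) / c := by
  rw [norm_mul, Complex.norm_real, Complex.norm_exp]
  have : (Complex.ofReal θ * Complex.I).re = 0 := by simp
  rw [this, Real.exp_zero, mul_one, Real.norm_eq_abs, abs_of_nonneg (by positivity)]

lemma fC_tsum_eq {σ : ℝ} (hσ : 0 < σ) (t : ℝ) :
    (∑' k : ℤ, Complex.ofReal (rexp (-π * (k:ℝ)^2 / σ^2)
          / (∑' j : ℤ, rexp (-π * (j:ℝ)^2 / σ^2)))
        * Complex.exp (Complex.ofReal (2*π*t*k) * Complex.I))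
      = Complex.ofReal (∑' k : ℤ, rexp (-π * (k:ℝ)^2 / σ^2)
          / (∑' j : ℤ, rexp (-π * (j:ℝ)^2 / σ^2)) * Real.cos (2*π*t*k)) := by
  set S : ℝ := ∑' j : ℤ, rexp (-π * (j:ℝ)^2 / σ^2) with hS
  set A : ℤ → ℝ := fun k => rexp (-π * (k:ℝ)^2 / σ^2) / S * Real.cos (2*π*t*k) with hA
  set B : ℤ → ℝ := fun k => rexp (-π * (k:ℝ)^2 / σ^2) / S * Real.sin (2*π*t*k) with hB
  have hAs := summable_wcos hσ t S
  have hBs := summable_wsin hσ t S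
  have hpt : ∀ k : ℤ, Complex.ofReal (rexp (-π * (k:ℝ)^2 / σ^2) / S)
      * Complex.exp (Complex.ofReal (2*π*t*k) * Complex.I)
      = Complex.ofReal (A k) + Complex.ofReal (B k) * Complex.I := by
    intro k
    rw [Complex.exp_mul_I, ← Complex.ofReal_cos, ← Complex.ofReal_sin, hA, hB]
    push_cast
    ring
  rw [tsum_congr hpt, Summable.tsum_add (Complex.summable_ofReal.mpr hAs)
    ((Complex.summable_ofReal.mpr hBs).mul_right Complex.I)]
  rw [tsum_mul_right, ← Complex.ofReal_tsum, ← Complex.ofReal_tsum]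
  have h2 : ∀ k : ℤ, B (-k) = - B k := by
    intro k
    rw [hB]
    push_cast
    rw [neg_sq, show 2*π*t*(-(k:ℝ)) = -(2*π*t*k) by ring, Real.sin_neg]
    ring
  have h1 : ∑' k : ℤ, B (-k) = ∑' k, B k := by
    simpa using (Equiv.neg ℤ).tsum_eq B
  rw [tsum_congr h2, tsum_neg] at h1
  have hB0 : (∑' k, B k) = 0 := by linarith
  rw [hB0, Complex.ofReal_zero, zero_mul, add_zero]

/-- For fixed `s ∈ (ℤ/qℤ)ⁿ`, `e ∈ (ℤ/qℤ)ᵐ` and `x, y` with coordinates i.i.d. from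
`D_{ℤ,σ}`, the bias of `⟨s,y⟩ + ⟨e,x⟩` modulo `q` is at least
`exp(−π(‖s‖² + ‖e‖²)σ²/q²)`. -/
theorem bias_inner_discrete_gaussian (q : ℕ) [NeZero q] (n m : ℕ)
    (σ : ℝ) (hσ : 0 < σ) (s : Fin n → ZMod q) (e : Fin m → ZMod q) :
    Real.exp (-π * ((∑ i, ((s i).val : ℝ) ^ 2) + ∑ j, ((e j).val : ℝ) ^ 2)
        * σ ^ 2 / q ^ 2)
      ≤ ∑' p : (Fin n → ℤ) × (Fin m → ℤ),
          (∏ i, Real.exp (-π * ((p.1 i : ℝ)) ^ 2 / σ ^ 2)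
              / ∑' k : ℤ, Real.exp (-π * (k : ℝ) ^ 2 / σ ^ 2))
          * (∏ j, Real.exp (-π * ((p.2 j : ℝ)) ^ 2 / σ ^ 2)
              / ∑' k : ℤ, Real.exp (-π * (k : ℝ) ^ 2 / σ ^ 2))
          * Real.cos (2 * π
              * (((∑ i, ((s i).val : ℤ) * p.1 i) + ∑ j, ((e j).val : ℤ) * p.2 j : ℤ) : ℝ)
              / q) := by
  have hq : (0:ℝ) < q := by
    exact_mod_cast Nat.pos_of_ne_zero (NeZero.ne q)
  have hS : (0:ℝ) < ∑' k : ℤ, rexp (-π * (k:ℝ)^2 / σ^2) := Sg_pos hσ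
  set S : ℝ := ∑' k : ℤ, rexp (-π * (k:ℝ)^2 / σ^2) with hSdef
  set ts : Fin n → ℝ := fun i => ((s i).val : ℝ)/q with hts
  set te : Fin m → ℝ := fun j => ((e j).val : ℝ)/q with hte
  set gs : Fin n → ℤ → ℂ := fun i k => Complex.ofReal (rexp (-π * (k:ℝ)^2 / σ^2) / S)
      * Complex.exp (Complex.ofReal (2*π*(ts i)*k) * Complex.I) with hgs
  set ge : Fin m → ℤ → ℂ := fun j k => Complex.ofReal (rexp (-π * (k:ℝ)^2 / σ^2) / S)
      * Complex.exp (Complex.ofReal (2*π*(te j)*k) * Complex.I) with hge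
  have hnorms : ∀ i, Summable fun k => ‖gs i k‖ := by
    intro i
    refine ((summable_w hσ).div_const S).congr (fun k => ?_)
    rw [hgs]
    exact (fC_norm hσ S hS _ k).symm
  have hnorme : ∀ j, Summable fun k => ‖ge j k‖ := by
    intro j
    refine ((summable_w hσ).div_const S).congr (fun k => ?_)
    rw [hge]
    exact (fC_norm hσ S hS _ k).symm
  obtain ⟨hPs, hEs⟩ := tsum_prod_pi gs hnorms
  obtain ⟨hPe, hEe⟩ := tsum_prod_pi ge hnorme
  -- the full complex function
  set F : (Fin n → ℤ) × (Fin m → ℤ) → ℂ :=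
    fun p => (∏ i, gs i (p.1 i)) * (∏ j, ge j (p.2 j)) with hF
  have hFsum : Summable F :=
    summable_mul_of_summable_norm (f := fun x : Fin n → ℤ => ∏ i, gs i (x i))
      (g := fun y : Fin m → ℤ => ∏ j, ge j (y j)) hPs hPe
  have hre : ∀ (r θ : ℝ), (Complex.ofReal r * Complex.exp (Complex.ofReal θ * Complex.I)).re
      = r * Real.cos θ := by
    intro r θ
    rw [Complex.exp_mul_I, ← Complex.ofReal_cos, ← Complex.ofReal_sin]
    have h : (Complex.ofReal r * (Complex.ofReal (Real.cos θ) + Complex.ofReal (Real.sin θ)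
        * Complex.I)) = Complex.ofReal (r * Real.cos θ) + Complex.ofReal (r * Real.sin θ)
        * Complex.I := by
      push_cast
      ring
    rw [h]
    simp only [Complex.add_re, Complex.ofReal_re, Complex.mul_I_re, Complex.ofReal_im,
      neg_zero, add_zero]
  -- pointwise real part
  have hFre : ∀ p : (Fin n → ℤ) × (Fin m → ℤ),
      (∏ i, Real.exp (-π * ((p.1 i : ℝ)) ^ 2 / σ ^ 2) / S)
        * (∏ j, Real.exp (-π * ((p.2 j : ℝ)) ^ 2 / σ ^ 2) / S)
        * Real.cos (2 * π
            * (((∑ i, ((s i).val : ℤ) * p.1 i) + ∑ j, ((e j).val : ℤ) * p.2 j : ℤ) : ℝ)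
            / q) = (F p).re := by
    intro p
    have h1 : (∏ i, gs i (p.1 i))
        = Complex.ofReal (∏ i, rexp (-π * ((p.1 i : ℝ))^2 / σ^2) / S)
          * Complex.exp (Complex.ofReal (∑ i, 2*π*(ts i)*(p.1 i)) * Complex.I) := by
      rw [hgs]
      simp only []
      rw [Finset.prod_mul_distrib, ← Complex.ofReal_prod, Complex.ofReal_sum,
        Finset.sum_mul, Complex.exp_sum]
    have h2 : (∏ j, ge j (p.2 j))
        = Complex.ofReal (∏ j, rexp (-π * ((p.2 j : ℝ))^2 / σ^2) / S)
          * Complex.exp (Complex.ofReal (∑ j, 2*π*(te j)*(p.2 j)) * Complex.I) := by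
      rw [hge]
      simp only []
      rw [Finset.prod_mul_distrib, ← Complex.ofReal_prod, Complex.ofReal_sum,
        Finset.sum_mul, Complex.exp_sum]
    have h3 : F p = Complex.ofReal ((∏ i, rexp (-π * ((p.1 i : ℝ))^2 / σ^2) / S)
          * (∏ j, rexp (-π * ((p.2 j : ℝ))^2 / σ^2) / S))
        * Complex.exp (Complex.ofReal ((∑ i, 2*π*(ts i)*(p.1 i))
            + ∑ j, 2*π*(te j)*(p.2 j)) * Complex.I) := by
      rw [hF]
      simp only []
      rw [h1, h2, Complex.ofReal_mul, Complex.ofReal_add, add_mul, Complex.exp_add]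
      ring
    rw [h3, hre]
    have hang : (∑ i, 2*π*(ts i)*(p.1 i)) + ∑ j, 2*π*(te j)*(p.2 j)
        = 2 * π * (((∑ i, ((s i).val : ℤ) * p.1 i) + ∑ j, ((e j).val : ℤ) * p.2 j : ℤ) : ℝ) / q := by
      simp only [hts, hte]
      have hA : (∑ i, 2*π*((((s i).val : ℝ))/q)*((p.1 i : ℝ)))
          = 2*π/q * ∑ i, ((s i).val : ℝ) * (p.1 i : ℝ) := by
        rw [Finset.mul_sum]
        exact Finset.sum_congr rfl (fun i _ => by ring)
      have hB : (∑ j, 2*π*((((e j).val : ℝ))/q)*((p.2 j : ℝ)))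
          = 2*π/q * ∑ j, ((e j).val : ℝ) * (p.2 j : ℝ) := by
        rw [Finset.mul_sum]
        exact Finset.sum_congr rfl (fun j _ => by ring)
      rw [hA, hB]
      push_cast
      ring
    rw [hang]
  -- single-coordinate sums
  have hcoord_s : ∀ i, (∑' k, gs i k)
      = Complex.ofReal (∑' k : ℤ, rexp (-π * (k:ℝ)^2 / σ^2) / S * Real.cos (2*π*(ts i)*k)) := by
    intro i
    have h := fC_tsum_eq hσ (ts i)
    rw [← hSdef] at h
    simp only [hgs]
    exact h
  have hcoord_e : ∀ j, (∑' k, ge j k)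
      = Complex.ofReal (∑' k : ℤ, rexp (-π * (k:ℝ)^2 / σ^2) / S * Real.cos (2*π*(te j)*k)) := by
    intro j
    have h := fC_tsum_eq hσ (te j)
    rw [← hSdef] at h
    simp only [hge]
    exact h
  -- the real single-coordinate biases
  set Bs : Fin n → ℝ := fun i => ∑' k : ℤ, rexp (-π * (k:ℝ)^2 / σ^2) / S * Real.cos (2*π*(ts i)*k)
    with hBs
  set Be : Fin m → ℝ := fun j => ∑' k : ℤ, rexp (-π * (k:ℝ)^2 / σ^2) / S * Real.cos (2*π*(te j)*k)
    with hBe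
  have hBs_lb : ∀ i, rexp (-π * ((s i).val : ℝ)^2 * σ^2 / q^2) ≤ Bs i := by
    intro i
    have h := coord_bound' hσ (ts i)
    rw [← hSdef] at h
    have he : -π * (ts i)^2 * σ^2 = -π * ((s i).val : ℝ)^2 * σ^2 / q^2 := by
      simp only [hts]
      field_simp
    rw [he] at h
    exact h
  have hBe_lb : ∀ j, rexp (-π * ((e j).val : ℝ)^2 * σ^2 / q^2) ≤ Be j := by
    intro j
    have h := coord_bound' hσ (te j)
    rw [← hSdef] at h
    have he : -π * (te j)^2 * σ^2 = -π * ((e j).val : ℝ)^2 * σ^2 / q^2 := by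
      simp only [hte]
      field_simp
    rw [he] at h
    exact h
  -- compute the RHS
  have hRHS : (∑' p : (Fin n → ℤ) × (Fin m → ℤ),
          (∏ i, Real.exp (-π * ((p.1 i : ℝ)) ^ 2 / σ ^ 2) / S)
          * (∏ j, Real.exp (-π * ((p.2 j : ℝ)) ^ 2 / σ ^ 2) / S)
          * Real.cos (2 * π
              * (((∑ i, ((s i).val : ℤ) * p.1 i) + ∑ j, ((e j).val : ℤ) * p.2 j : ℤ) : ℝ)
              / q))
      = (∏ i, Bs i) * (∏ j, Be j) := by
    rw [tsum_congr hFre, ← Complex.re_tsum hFsum]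
    have h1 : (∑' p : (Fin n → ℤ) × (Fin m → ℤ), F p)
        = (∑' x : Fin n → ℤ, ∏ i, gs i (x i)) * (∑' y : Fin m → ℤ, ∏ j, ge j (y j)) := by
      rw [hF]
      exact (tsum_mul_tsum_of_summable_norm (f := fun x : Fin n → ℤ => ∏ i, gs i (x i))
        (g := fun y : Fin m → ℤ => ∏ j, ge j (y j)) hPs hPe).symm
    rw [h1, hEs, hEe]
    rw [Finset.prod_congr rfl (fun i _ => hcoord_s i),
      Finset.prod_congr rfl (fun j _ => hcoord_e j),
      ← Complex.ofReal_prod, ← Complex.ofReal_prod, ← Complex.ofReal_mul, Complex.ofReal_re]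
  rw [hRHS]
  -- final inequality
  have hsplit : Real.exp (-π * ((∑ i, ((s i).val : ℝ) ^ 2) + ∑ j, ((e j).val : ℝ) ^ 2)
        * σ ^ 2 / q ^ 2)
      = (∏ i, rexp (-π * ((s i).val : ℝ)^2 * σ^2 / q^2))
        * (∏ j, rexp (-π * ((e j).val : ℝ)^2 * σ^2 / q^2)) := by
    rw [← Real.exp_sum, ← Real.exp_sum, ← Real.exp_add]
    congr 1
    have hA : (∑ i, -π * ((s i).val : ℝ)^2 * σ^2 / q^2)
        = -π * (∑ i, ((s i).val : ℝ)^2) * σ^2 / q^2 := by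
      rw [← Finset.sum_div, ← Finset.sum_mul, ← Finset.mul_sum]
    have hB : (∑ j, -π * ((e j).val : ℝ)^2 * σ^2 / q^2)
        = -π * (∑ j, ((e j).val : ℝ)^2) * σ^2 / q^2 := by
      rw [← Finset.sum_div, ← Finset.sum_mul, ← Finset.mul_sum]
    rw [hA, hB]
    ring
  rw [hsplit]
  have h1 : (∏ i, rexp (-π * ((s i).val : ℝ)^2 * σ^2 / q^2)) ≤ ∏ i, Bs i :=
    Finset.prod_le_prod (fun i _ => (exp_pos _).le) (fun i _ => hBs_lb i)
  have h2 : (∏ j, rexp (-π * ((e j).val : ℝ)^2 * σ^2 / q^2)) ≤ ∏ j, Be j :=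
    Finset.prod_le_prod (fun j _ => (exp_pos _).le) (fun j _ => hBe_lb j)
  have hBspos : (0:ℝ) ≤ ∏ i, Bs i :=
    le_trans (Finset.prod_nonneg (fun i _ => (exp_pos _).le)) h1
  exact mul_le_mul h1 h2 (Finset.prod_nonneg (fun j _ => (exp_pos _).le)) hBspos
end
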